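/- arXiv:1408.2947 — 5 statements merged into one kernel-verified Lean document; each statement's English description precedes it below -/
import Mathlib

section
/- For every ε > 0 there exists n₀ ∈ ℕ such that for all n ≥ n₀ the following deterministic statement holds: any two points u, v with r_u > R_{i_0}, r_v > R_{i_0} and d(u,v) ≤ R satisfy |θ_u − θ_v| ≤ e^{−R/2} R^{C_0+ε}; in particular |θ_u − θ_v| = O((ln n)^{C_0+o(1)}/n). -/
open Real MeasureTheory Filter

noncomputable def coshDist (p q : ℝ × ℝ) : ℝ :=
  Real.cosh p.1 * Real.cosh q.1 - Real.sinh p.1 * Real.sinh q.1 * Real.cos (p.2 - q.2)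

lemma coshDist_symm (p q : ℝ × ℝ) : coshDist p q = coshDist q p := by
  unfold coshDist
  rw [mul_comm (Real.cosh p.1) (Real.cosh q.1), mul_comm (Real.sinh p.1) (Real.sinh q.1),
    ← Real.cos_neg, neg_sub]

noncomputable def RHG {V : Type} (Rr : ℝ) (x : V → ℝ × ℝ) : SimpleGraph V where
  Adj i j := i ≠ j ∧ coshDist (x i) (x j) ≤ Real.cosh Rr
  symm := by
    constructor
    intro i j h
    exact ⟨h.1.symm, by rw [coshDist_symm]; exact h.2⟩
  loopless := by
    constructor
    intro i h
    exact h.1 rfl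

noncomputable def dens (α Rr : ℝ) (p : ℝ × ℝ) : ℝ :=
  if 0 ≤ p.1 ∧ p.1 < Rr ∧ 0 ≤ p.2 ∧ p.2 < 2 * Real.pi then
    α * Real.sinh (α * p.1) / (2 * Real.pi * (Real.cosh (α * Rr) - 1))
  else 0

noncomputable def hypMeasure (α Rr : ℝ) : Measure (ℝ × ℝ) :=
  volume.withDensity (fun p => ENNReal.ofReal (dens α Rr p))

noncomputable def mes (α Rr : ℝ) (S : Set (ℝ × ℝ)) : ℝ := (hypMeasure α Rr S).toReal

noncomputable def sampleMeasure (α Rr : ℝ) (n : ℕ) : Measure (Fin n → ℝ × ℝ) :=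
  volume.withDensity (fun x => ∏ i, ENNReal.ofReal (dens α Rr (x i)))

noncomputable def Rn (C : ℝ) (n : ℕ) : ℝ := 2 * Real.log n + C

noncomputable def hBall (p : ℝ × ℝ) (ρ : ℝ) : Set (ℝ × ℝ) := {q | coshDist p q ≤ Real.cosh ρ}

noncomputable def origin : ℝ × ℝ := (0, 0)

noncomputable def C0 (α : ℝ) : ℝ := 2 / (1/2 - 3/4 * α + α ^ 2 / 4)

noncomputable def Ri (α Rr : ℝ) (i : ℕ) : ℝ :=
  if i = 0 then Rr / 2 else Rr * Real.exp (-(α ^ i) / 2)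

noncomputable def i0 (α C : ℝ) (n : ℕ) : ℕ :=
  sInf {i : ℕ | α ^ i ≤ 2 * C0 α * Real.log (Rn C n) / Rn C n}

noncomputable def angDist (a b : ℝ) : ℝ := min |a - b| (2 * Real.pi - |a - b|)

def validPoint (Rr : ℝ) (p : ℝ × ℝ) : Prop :=
  0 ≤ p.1 ∧ p.1 < Rr ∧ 0 ≤ p.2 ∧ p.2 < 2 * Real.pi

def extendPt {n : ℕ} (q : ℝ × ℝ) (x : Fin n → ℝ × ℝ) : Option (Fin n) → ℝ × ℝ :=
  fun v => v.elim q x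

lemma cos_angDist (a b : ℝ) : Real.cos (angDist a b) = Real.cos (a - b) := by
  unfold angDist
  rcases min_cases |a - b| (2 * Real.pi - |a - b|) with ⟨h, _⟩ | ⟨h, _⟩
  · rw [h, Real.cos_abs]
  · rw [h, Real.cos_sub, Real.cos_two_pi, Real.sin_two_pi, Real.cos_abs]
    ring

lemma angDist_nonneg' {a b : ℝ} (ha : 0 ≤ a) (ha' : a < 2*π) (hb : 0 ≤ b) (hb' : b < 2*π) :
    0 ≤ angDist a b := by
  have : |a - b| < 2 * π := abs_sub_lt_of_nonneg_of_lt ha ha' hb hb'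
  simp only [angDist, le_min_iff]
  exact ⟨abs_nonneg _, by linarith⟩

lemma angDist_le_pi' (a b : ℝ) : angDist a b ≤ π := by
  rcases le_total |a - b| π with h | h
  · exact (min_le_left _ _).trans h
  · exact (min_le_right _ _).trans (by linarith)

lemma sinh_ge' {r : ℝ} (hr : 1 ≤ r) : Real.exp r / 4 ≤ Real.sinh r := by
  rw [Real.sinh_eq]
  have h1 : Real.exp (-r) ≤ 1 := Real.exp_le_one_iff.2 (by linarith)
  have h2 : (2:ℝ) ≤ Real.exp r := by
    calc (2:ℝ) ≤ Real.exp 1 := by have := Real.add_one_le_exp (1:ℝ); linarith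
      _ ≤ Real.exp r := Real.exp_le_exp.2 hr
  linarith


/-- Deterministic: two points of radius larger than `R_{i₀}` at hyperbolic
distance at most `R` subtend an angle at most `e^{-R/2} R^{C₀+ε}` at the origin. -/
theorem angle_bound_far (α C : ℝ) (hα : 1/2 < α) (hα' : α < 1) (ε : ℝ) (hε : 0 < ε) :
    ∃ n₀ : ℕ, ∀ n ≥ n₀, ∀ u v : ℝ × ℝ,
      validPoint (Rn C n) u → validPoint (Rn C n) v →
      Ri α (Rn C n) (i0 α C n) < u.1 → Ri α (Rn C n) (i0 α C n) < v.1 →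
      coshDist u v ≤ Real.cosh (Rn C n) →
      angDist u.2 v.2 ≤ Real.exp (-(Rn C n) / 2) * Rn C n ^ (C0 α + ε) := by
  have hα0 : 0 < α := by linarith
  have hC0 : 0 < C0 α := by
    unfold C0; apply div_pos (by norm_num); nlinarith
  have hRt : Tendsto (fun n : ℕ => Rn C n) atTop atTop := by
    unfold Rn
    apply tendsto_atTop_add_const_right
    exact (Real.tendsto_log_atTop.comp tendsto_natCast_atTop_atTop).const_mul_atTop (by norm_num)
  have hB : ∀ᶠ x : ℝ in atTop, C0 α * Real.log x < x / 2 := by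
    have h := Real.isLittleO_log_id_atTop.bound (c := 1 / (4 * C0 α)) (by positivity)
    filter_upwards [h, eventually_ge_atTop (1:ℝ)] with x hx hx1
    have hlog : 0 ≤ Real.log x := Real.log_nonneg hx1
    rw [Real.norm_eq_abs, Real.norm_eq_abs, abs_of_nonneg hlog, id,
      abs_of_nonneg (by linarith : (0:ℝ) ≤ x)] at hx
    have h4 : C0 α * Real.log x ≤ C0 α * (1 / (4 * C0 α) * x) :=
      mul_le_mul_of_nonneg_left hx hC0.le
    have h5 : C0 α * (1 / (4 * C0 α) * x) = x / 4 := by field_simp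
    linarith
  have hCc : ∀ᶠ x : ℝ in atTop, Real.sqrt 8 * π ≤ x ^ ε :=
    (tendsto_rpow_atTop hε).eventually_ge_atTop _
  have hA : ∀ᶠ x : ℝ in atTop, (3:ℝ) ≤ x := eventually_ge_atTop 3
  obtain ⟨n₀, hn₀⟩ := eventually_atTop.mp (hRt.eventually (hA.and (hB.and hCc)))
  refine ⟨n₀, ?_⟩
  intro n hn u v hu hv hru hrv hdist
  obtain ⟨h3, hB', hC'⟩ := hn₀ n hn
  set R := Rn C n with hRdef
  have hRpos : 0 < R := by linarith
  have hlogR : 0 < Real.log R := Real.log_pos (by linarith)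
  -- i0 properties
  have hSne : {j : ℕ | α ^ j ≤ 2 * C0 α * Real.log R / R}.Nonempty := by
    obtain ⟨j, hj⟩ := exists_pow_lt_of_lt_one
      (show (0:ℝ) < 2 * C0 α * Real.log R / R by positivity) hα'
    exact ⟨j, hj.le⟩
  have hi_mem : α ^ (i0 α C n) ≤ 2 * C0 α * Real.log R / R := Nat.sInf_mem hSne
  have hi_ne : i0 α C n ≠ 0 := by
    intro h0
    rw [h0, pow_zero, le_div_iff₀ hRpos, one_mul] at hi_mem
    linarith
  -- lower bound on Ri
  have hRi : R - C0 α * Real.log R ≤ Ri α R (i0 α C n) := by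
    rw [Ri, if_neg hi_ne]
    have h1 : 1 - α ^ (i0 α C n) / 2 ≤ Real.exp (-(α ^ (i0 α C n)) / 2) := by
      have := Real.add_one_le_exp (-(α ^ (i0 α C n)) / 2)
      linarith
    have h2 : R * (1 - α ^ (i0 α C n) / 2) ≤ R * Real.exp (-(α ^ (i0 α C n)) / 2) :=
      mul_le_mul_of_nonneg_left h1 hRpos.le
    have h3' : α ^ (i0 α C n) * R ≤ 2 * C0 α * Real.log R :=
      (le_div_iff₀ hRpos).mp hi_mem
    nlinarith
  set m : ℝ := R - C0 α * Real.log R with hmdef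
  have hm1 : 1 ≤ m := by
    have : R / 2 < m := by simp only [hmdef]; linarith
    linarith
  have hum : 1 ≤ u.1 := hm1.trans (hRi.trans hru.le)
  have hvm : 1 ≤ v.1 := hm1.trans (hRi.trans hrv.le)
  have hmu : m ≤ u.1 := hRi.trans hru.le
  have hmv : m ≤ v.1 := hRi.trans hrv.le
  -- angle
  set θ : ℝ := angDist u.2 v.2 with hθdef
  have hθ0 : 0 ≤ θ := angDist_nonneg' hu.2.2.1 hu.2.2.2 hv.2.2.1 hv.2.2.2
  have hθπ : θ ≤ π := angDist_le_pi' _ _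
  -- key inequality
  have hcosθ : Real.cos θ = Real.cos (u.2 - v.2) := cos_angDist _ _
  have hsinh : Real.sinh u.1 * Real.sinh v.1 * (1 - Real.cos θ) ≤ Real.exp R := by
    have hcosh1 : (1:ℝ) ≤ Real.cosh (u.1 - v.1) := Real.one_le_cosh _
    have hsub : Real.cosh (u.1 - v.1) =
        Real.cosh u.1 * Real.cosh v.1 - Real.sinh u.1 * Real.sinh v.1 := Real.cosh_sub _ _
    have hcR : Real.cosh R ≤ Real.exp R := by
      rw [Real.cosh_eq]
      have : Real.exp (-R) ≤ Real.exp R := Real.exp_le_exp.2 (by linarith)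
      linarith
    have hd : Real.cosh u.1 * Real.cosh v.1 - Real.sinh u.1 * Real.sinh v.1 * Real.cos θ
        ≤ Real.cosh R := by rw [hcosθ]; exact hdist
    nlinarith
  have hjordan : 2 / π ^ 2 * θ ^ 2 ≤ 1 - Real.cos θ := by
    have := Real.cos_le_one_sub_mul_cos_sq (x := θ) (by rwa [abs_of_nonneg hθ0])
    linarith
  have hsu : Real.exp u.1 / 4 ≤ Real.sinh u.1 := sinh_ge' hum
  have hsv : Real.exp v.1 / 4 ≤ Real.sinh v.1 := sinh_ge' hvm
  have hπ : 0 < π := Real.pi_pos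
  -- θ² bound
  have hθsq : θ ^ 2 ≤ 8 * π ^ 2 * Real.exp (R - u.1 - v.1) := by
    have hpu : (0:ℝ) < Real.exp u.1 / 4 := by positivity
    have hpv : (0:ℝ) < Real.exp v.1 / 4 := by positivity
    have hJ0 : 0 ≤ 2 / π ^ 2 * θ ^ 2 := by positivity
    have key : (Real.exp u.1 / 4) * (Real.exp v.1 / 4) * (2 / π ^ 2 * θ ^ 2)
        ≤ Real.exp R := by
      calc (Real.exp u.1 / 4) * (Real.exp v.1 / 4) * (2 / π ^ 2 * θ ^ 2)
          ≤ Real.sinh u.1 * Real.sinh v.1 * (1 - Real.cos θ) := by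
            apply mul_le_mul
            · exact mul_le_mul hsu hsv hpv.le (hpu.trans_le hsu).le
            · exact hjordan
            · exact hJ0
            · positivity
        _ ≤ Real.exp R := hsinh
    have expand : (Real.exp u.1 / 4) * (Real.exp v.1 / 4) * (2 / π ^ 2 * θ ^ 2)
        = θ ^ 2 * (Real.exp u.1 * Real.exp v.1) / (8 * π ^ 2) := by ring
    rw [expand, div_le_iff₀ (by positivity)] at key
    have heq : 8 * π ^ 2 * Real.exp (R - u.1 - v.1)
        = 8 * π ^ 2 * Real.exp R / (Real.exp u.1 * Real.exp v.1) := by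
      rw [Real.exp_sub, Real.exp_sub]; ring
    rw [heq, le_div_iff₀ (by positivity)]
    linarith
  -- compare exponents
  have hexp : Real.exp (R - u.1 - v.1) ≤ Real.exp (-R) * R ^ (2 * C0 α) := by
    have h1 : R - u.1 - v.1 ≤ -R + 2 * C0 α * Real.log R := by
      simp only [hmdef] at hmu hmv; linarith
    calc Real.exp (R - u.1 - v.1) ≤ Real.exp (-R + 2 * C0 α * Real.log R) :=
          Real.exp_le_exp.2 h1
      _ = Real.exp (-R) * R ^ (2 * C0 α) := by
          rw [Real.exp_add, Real.rpow_def_of_pos hRpos]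
          ring_nf
  -- the target squared
  set T : ℝ := Real.exp (-R / 2) * R ^ (C0 α + ε) with hTdef
  have hT0 : 0 ≤ T := by positivity
  have hTsq : T ^ 2 = Real.exp (-R) * (R ^ (2 * C0 α) * (R ^ ε) ^ 2) := by
    simp only [hTdef]
    rw [mul_pow, ← Real.exp_nat_mul, ← Real.rpow_natCast (R ^ (C0 α + ε)),
      ← Real.rpow_mul hRpos.le, ← Real.rpow_natCast (R ^ ε),
      ← Real.rpow_mul hRpos.le, ← Real.rpow_add hRpos]
    norm_num
    ring_nf
  have hfinal : θ ^ 2 ≤ T ^ 2 := by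
    have h8 : 8 * π ^ 2 ≤ (R ^ ε) ^ 2 := by
      have := pow_le_pow_left₀ (by positivity : (0:ℝ) ≤ Real.sqrt 8 * π) hC' 2
      calc 8 * π ^ 2 = (Real.sqrt 8 * π) ^ 2 := by
            rw [mul_pow, Real.sq_sqrt (by norm_num : (0:ℝ) ≤ 8)]
        _ ≤ (R ^ ε) ^ 2 := this
    calc θ ^ 2 ≤ 8 * π ^ 2 * Real.exp (R - u.1 - v.1) := hθsq
      _ ≤ 8 * π ^ 2 * (Real.exp (-R) * R ^ (2 * C0 α)) := by
          apply mul_le_mul_of_nonneg_left hexp (by positivity)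
      _ ≤ (R ^ ε) ^ 2 * (Real.exp (-R) * R ^ (2 * C0 α)) := by
          apply mul_le_mul_of_nonneg_right h8 (by positivity)
      _ = T ^ 2 := by rw [hTsq]; ring
  calc θ = Real.sqrt (θ ^ 2) := (Real.sqrt_sq hθ0).symm
    _ ≤ Real.sqrt (T ^ 2) := Real.sqrt_le_sqrt hfinal
    _ = T := Real.sqrt_sq hT0
end

section
/- Let j_0 = j_0(α) be a positive integer constant and c ∈ (1/2,1) be such that R_{j_0} = R e^{−α^{j_0}/2} = cR; let T be the largest integer with c − (T/2)(1−c)(1−α) > 1/2, and set R'_0 = cR and R'_i = R(c − (i/2)(1−c)(1−α)) for 1 ≤ i ≤ T. Then there exist a constant γ ∈ (0,1) and n₀ ∈ ℕ such that for all n ≥ n₀: (i) for every integer 1 ≤ j ≤ T−1 and every point Q with R'_j < r_Q ≤ R'_{j−1}, μ(B_Q(R) ∩ (B_O(R'_j) \ B_O(R'_{j+1}))) ≥ n^{−γ}; and (ii) for every point Q with R'_T < r_Q ≤ R'_{T−1}, μ(B_Q(R) ∩ B_O(R/2)) ≥ n^{−γ}. Consequently, in each case the probability that none of the n i.i.d.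 μ-distributed random vertices lies in the corresponding region is at most e^{−n^{1−γ}/2}. -/
open Real MeasureTheory Filter

/-- The modified bands `R'_i = R(c - (i/2)(1-c)(1-α))`, with real index `i`. -/
noncomputable def Rp (α C cc : ℝ) (n : ℕ) (i : ℝ) : ℝ :=
  Rn C n * (cc - i / 2 * (1 - cc) * (1 - α))

-- ============ product lintegral ============

lemma lintegral_pi_prod_pow {E : Type*} [MeasurableSpace E] (μ : Measure E) [SigmaFinite μ]
    (g : E → ENNReal) (hg : Measurable g) (n : ℕ) :
    ∫⁻ x : Fin n → E, ∏ i, g (x i) ∂(Measure.pi fun _ => μ) = (∫⁻ p, g p ∂μ) ^ n := by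
  induction n with
  | zero => simp [Measure.pi_of_empty (fun _ : Fin 0 => μ)]
  | succ n ih =>
      have hmeas : Measurable fun y : E × (Fin n → E) => g y.1 * ∏ i, g (y.2 i) :=
        (hg.comp measurable_fst).mul <|
          Finset.measurable_prod _ fun i _ => hg.comp ((measurable_pi_apply i).comp measurable_snd)
      have hmp := (measurePreserving_piFinSuccAbove (fun _ : Fin (n+1) => μ) 0).lintegral_comp hmeas
      have hfun : (fun x : Fin (n+1) → E =>
          (fun y : E × (Fin n → E) => g y.1 * ∏ i, g (y.2 i))
            ((MeasurableEquiv.piFinSuccAbove (fun _ => E) 0) x)) = fun x => ∏ i, g (x i) := by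
        funext x
        simp [MeasurableEquiv.piFinSuccAbove, Fin.prod_univ_succ, Fin.zero_succAbove,
          Fin.removeNth_zero, Fin.tail]
      rw [hfun] at hmp
      rw [hmp, lintegral_prod_mul (f := g) (g := fun z : Fin n → E => ∏ i, g (z i))
        hg.aemeasurable
        (Finset.measurable_prod Finset.univ
          (fun i _ => hg.comp (measurable_pi_apply i))).aemeasurable, ih, pow_succ, mul_comm]

lemma indicator_pi_prod {E : Type*} {n : ℕ} (t : Set E) (g : E → ENNReal) (x : Fin n → E) :
    (Set.pi Set.univ fun _ => t).indicator (fun x : Fin n → E => ∏ i, g (x i)) x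
      = ∏ i, t.indicator g (x i) := by
  by_cases h : ∀ i, x i ∈ t
  · rw [Set.indicator_of_mem (Set.mem_univ_pi.2 h)]
    exact Finset.prod_congr rfl fun i _ => (Set.indicator_of_mem (h i) g).symm
  · push_neg at h
    obtain ⟨i, hi⟩ := h
    rw [Set.indicator_of_notMem (by simp [Set.mem_univ_pi]; exact ⟨i, hi⟩)]
    exact (Finset.prod_eq_zero (Finset.mem_univ i) (Set.indicator_of_notMem hi g)).symm

lemma dens_measurable (α Rr : ℝ) : Measurable (dens α Rr) := by
  unfold dens
  apply Measurable.ite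
  · exact (measurableSet_le measurable_const measurable_fst).inter
      ((measurableSet_lt measurable_fst measurable_const).inter
      ((measurableSet_le measurable_const measurable_snd).inter
      (measurableSet_lt measurable_snd measurable_const)))
  · exact ((continuous_const.mul (Real.continuous_sinh.comp
      (continuous_const.mul continuous_fst))).div_const _).measurable
  · exact measurable_const

lemma sampleMeasure_avoid (α Rr : ℝ) (n : ℕ) (S : Set (ℝ × ℝ)) (hS : MeasurableSet S) :
    sampleMeasure α Rr n {x | ∀ i, x i ∉ S} = (hypMeasure α Rr Sᶜ) ^ n := by
  have hset : {x : Fin n → ℝ × ℝ | ∀ i, x i ∉ S} = Set.pi Set.univ (fun _ => Sᶜ) := by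
    ext x; simp [Set.mem_univ_pi]
  have hf : Measurable fun p : ℝ × ℝ => ENNReal.ofReal (dens α Rr p) :=
    (dens_measurable α Rr).ennreal_ofReal
  rw [hset, sampleMeasure,
    withDensity_apply _ (MeasurableSet.univ_pi fun _ => hS.compl),
    ← lintegral_indicator (MeasurableSet.univ_pi fun _ => hS.compl)]
  have : (fun x : Fin n → ℝ × ℝ =>
      (Set.pi Set.univ fun _ => Sᶜ).indicator (fun x => ∏ i, ENNReal.ofReal (dens α Rr (x i))) x)
      = fun x => ∏ i, Sᶜ.indicator (fun p => ENNReal.ofReal (dens α Rr p)) (x i) := by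
    funext x
    exact indicator_pi_prod Sᶜ (fun p => ENNReal.ofReal (dens α Rr p)) x
  rw [this, volume_pi, lintegral_pi_prod_pow volume _ (hf.indicator hS.compl) n,
    lintegral_indicator hS.compl, hypMeasure, withDensity_apply _ hS.compl]

-- ============ rectangle measure ============

lemma lintegral_rect_fst (g : ℝ → ℝ) (hg : Measurable g) (s t : Set ℝ)
    (hs : MeasurableSet s) (ht : MeasurableSet t) :
    ∫⁻ p in s ×ˢ t, ENNReal.ofReal (g p.1) ∂(volume : Measure (ℝ × ℝ))
      = (∫⁻ r in s, ENNReal.ofReal (g r)) * volume t := by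
  rw [Measure.volume_eq_prod, ← Measure.prod_restrict]
  have := lintegral_prod_mul (μ := volume.restrict s) (ν := volume.restrict t)
    (f := fun r => ENNReal.ofReal (g r)) (g := fun _ => (1 : ENNReal))
    (hg.ennreal_ofReal).aemeasurable aemeasurable_const
  simpa using this

lemma lintegral_sinh_Ioc (α D a b : ℝ) (hα : 0 < α) (hD : 0 < D) (h0 : 0 ≤ a) (hab : a ≤ b) :
    ∫⁻ r in Set.Ioc a b, ENNReal.ofReal (α * Real.sinh (α * r) / D)
      = ENNReal.ofReal ((Real.cosh (α * b) - Real.cosh (α * a)) / D) := by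
  have hcont : Continuous fun r : ℝ => α * Real.sinh (α * r) / D :=
    (continuous_const.mul (Real.continuous_sinh.comp (continuous_const.mul continuous_id))).div_const _
  rw [← MeasureTheory.ofReal_integral_eq_lintegral_ofReal
      (hcont.integrableOn_Ioc) ?nonneg]
  · congr 1
    rw [← intervalIntegral.integral_of_le hab]
    have hftc : ∫ x in a..b, α * Real.sinh (α * x) / D
        = (∫ x in a..b, α * Real.sinh (α * x)) / D := intervalIntegral.integral_div _ _
    rw [hftc]
    congr 1
    have : ∀ x ∈ Set.uIcc a b, HasDerivAt (fun y => Real.cosh (α * y)) (α * Real.sinh (α * x)) x := by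
      intro x _
      have h1 : HasDerivAt (fun y : ℝ => α * y) α x := by
        simpa using (hasDerivAt_id x).const_mul α
      have := (Real.hasDerivAt_cosh (α * x)).comp x h1
      have h2 : HasDerivAt (fun y => Real.cosh (α * y)) (Real.sinh (α * x) * α) x := this
      rwa [mul_comm (Real.sinh (α * x)) α] at h2
    rw [intervalIntegral.integral_eq_sub_of_hasDerivAt this
      ((continuous_const.mul (Real.continuous_sinh.comp
        (continuous_const.mul continuous_id))).intervalIntegrable a b)]
  case nonneg =>
    filter_upwards [MeasureTheory.ae_restrict_mem measurableSet_Ioc] with r hr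
    have h1 : 0 ≤ Real.sinh (α * r) := by
      rw [Real.sinh_nonneg_iff]
      exact mul_nonneg hα.le (h0.trans hr.1.le)
    positivity

lemma hypMeasure_rect (α Rr : ℝ) (hα : 0 < α) (hRr : 0 < Rr) {r1 r2 θ1 θ2 : ℝ}
    (h0 : 0 ≤ r1) (h12 : r1 ≤ r2) (h2R : r2 < Rr)
    (ht0 : 0 ≤ θ1) (ht12 : θ1 ≤ θ2) (ht2 : θ2 < 2 * Real.pi) :
    hypMeasure α Rr (Set.Ioc r1 r2 ×ˢ Set.Ioc θ1 θ2)
      = ENNReal.ofReal ((Real.cosh (α * r2) - Real.cosh (α * r1))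
          / (2 * Real.pi * (Real.cosh (α * Rr) - 1))) * ENNReal.ofReal (θ2 - θ1) := by
  have hmeas : MeasurableSet (Set.Ioc r1 r2 ×ˢ Set.Ioc θ1 θ2) :=
    measurableSet_Ioc.prod measurableSet_Ioc
  rw [hypMeasure, withDensity_apply _ hmeas]
  have hcongr : ∀ p ∈ Set.Ioc r1 r2 ×ˢ Set.Ioc θ1 θ2,
      ENNReal.ofReal (dens α Rr p)
        = ENNReal.ofReal (α * Real.sinh (α * p.1) / (2 * Real.pi * (Real.cosh (α * Rr) - 1))) := by
    intro p hp
    obtain ⟨hp1, hp2⟩ := hp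
    have : 0 ≤ p.1 ∧ p.1 < Rr ∧ 0 ≤ p.2 ∧ p.2 < 2 * Real.pi :=
      ⟨h0.trans hp1.1.le, lt_of_le_of_lt hp1.2 h2R, ht0.trans hp2.1.le, lt_of_le_of_lt hp2.2 ht2⟩
    rw [dens, if_pos this]
  rw [setLIntegral_congr_fun hmeas hcongr]
  have hD : 0 < 2 * Real.pi * (Real.cosh (α * Rr) - 1) := by
    have h1 : 1 < Real.cosh (α * Rr) := by
      rw [Real.one_lt_cosh]
      positivity
    have := Real.two_pi_pos
    nlinarith
  rw [lintegral_rect_fst (fun r => α * Real.sinh (α * r) / (2 * Real.pi * (Real.cosh (α * Rr) - 1))) (by fun_prop) _ _ measurableSet_Ioc measurableSet_Ioc,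
    lintegral_sinh_Ioc α _ r1 r2 hα hD h0 h12, Real.volume_Ioc]

-- ============ total mass ============

lemma hypMeasure_univ (α Rr : ℝ) (hα : 0 < α) (hRr : 0 < Rr) :
    hypMeasure α Rr Set.univ = 1 := by
  have hD : 0 < 2 * Real.pi * (Real.cosh (α * Rr) - 1) := by
    have h1 : 1 < Real.cosh (α * Rr) := by rw [Real.one_lt_cosh]; positivity
    have := Real.two_pi_pos
    nlinarith
  have hB : MeasurableSet (Set.Ico (0:ℝ) Rr ×ˢ Set.Ico (0:ℝ) (2*Real.pi)) :=
    measurableSet_Ico.prod measurableSet_Ico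
  have hfun : (fun p : ℝ × ℝ => ENNReal.ofReal (dens α Rr p))
      = (Set.Ico (0:ℝ) Rr ×ˢ Set.Ico (0:ℝ) (2*Real.pi)).indicator
        (fun p => ENNReal.ofReal (α * Real.sinh (α * p.1) / (2 * Real.pi * (Real.cosh (α * Rr) - 1)))) := by
    funext p
    by_cases hp : 0 ≤ p.1 ∧ p.1 < Rr ∧ 0 ≤ p.2 ∧ p.2 < 2 * Real.pi
    · have hmem : p ∈ Set.Ico (0:ℝ) Rr ×ˢ Set.Ico (0:ℝ) (2*Real.pi) :=
        ⟨⟨hp.1, hp.2.1⟩, hp.2.2.1, hp.2.2.2⟩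
      rw [Set.indicator_of_mem hmem, dens, if_pos hp]
    · have hnot : p ∉ Set.Ico (0:ℝ) Rr ×ˢ Set.Ico (0:ℝ) (2*Real.pi) := by
        intro hmem
        exact hp ⟨hmem.1.1, hmem.1.2, hmem.2.1, hmem.2.2⟩
      rw [Set.indicator_of_notMem hnot, dens, if_neg hp]
      simp
  rw [hypMeasure, withDensity_apply _ MeasurableSet.univ, Measure.restrict_univ, hfun,
    lintegral_indicator hB,
    lintegral_rect_fst (fun r => α * Real.sinh (α * r) / (2 * Real.pi * (Real.cosh (α * Rr) - 1)))
      (by fun_prop) _ _ measurableSet_Ico measurableSet_Ico]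
  rw [setLIntegral_congr (Ico_ae_eq_Ioc (a := (0:ℝ)) (b := Rr)),
    lintegral_sinh_Ioc α _ 0 Rr hα hD le_rfl hRr.le, Real.volume_Ico]
  have hge : (1:ℝ) < Real.cosh (α * Rr) := by rw [Real.one_lt_cosh]; positivity
  rw [mul_zero, Real.cosh_zero]
  rw [← ENNReal.ofReal_mul (div_nonneg (by linarith) hD.le)]
  rw [show (Real.cosh (α * Rr) - 1) / (2 * Real.pi * (Real.cosh (α * Rr) - 1))
      * (2 * Real.pi - 0) = 1 by
      rw [sub_zero, div_mul_eq_mul_div, div_eq_one_iff_eq hD.ne']; ring]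
  simp

lemma hypMeasure_le_one (α Rr : ℝ) (hα : 0 < α) (hRr : 0 < Rr) (S : Set (ℝ × ℝ)) :
    hypMeasure α Rr S ≤ 1 := by
  rw [← hypMeasure_univ α Rr hα hRr]
  exact measure_mono (Set.subset_univ S)

lemma mes_mono (α Rr : ℝ) (hα : 0 < α) (hRr : 0 < Rr) {S S' : Set (ℝ × ℝ)} (h : S ⊆ S') :
    mes α Rr S ≤ mes α Rr S' :=
  ENNReal.toReal_mono (fun ht => by
      simpa [ht] using (hypMeasure_le_one α Rr hα hRr S').trans_lt ENNReal.one_lt_top)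
    (measure_mono h)

-- ============ probability bound ============

lemma prob_avoid (α Rr : ℝ) (hα : 0 < α) (hRr : 0 < Rr) (n : ℕ) (hn : 1 ≤ n)
    (S : Set (ℝ × ℝ)) (hS : MeasurableSet S) (γ : ℝ)
    (hγ : (n:ℝ) ^ (-γ) ≤ mes α Rr S) :
    (sampleMeasure α Rr n {x | ∀ i, x i ∉ S}).toReal ≤ Real.exp (-(n:ℝ) ^ (1-γ) / 2) := by
  have hle : hypMeasure α Rr S ≤ 1 := hypMeasure_le_one α Rr hα hRr S
  have hne : hypMeasure α Rr S ≠ ⊤ := fun ht => by simp [ht] at hle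
  have hp1 : mes α Rr S ≤ 1 := by
    have := ENNReal.toReal_mono ENNReal.one_ne_top hle
    simpa [mes] using this
  have hn0 : (0:ℝ) < n := by exact_mod_cast hn
  rw [sampleMeasure_avoid α Rr n S hS, measure_compl hS hne, hypMeasure_univ α Rr hα hRr,
    ENNReal.toReal_pow, ENNReal.toReal_sub_of_le hle ENNReal.one_ne_top, ENNReal.toReal_one]
  have step1 : (1 - mes α Rr S) ^ n ≤ Real.exp (-(mes α Rr S)) ^ n := by
    apply pow_le_pow_left₀ (by linarith) _ n
    have := Real.add_one_le_exp (-(mes α Rr S))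
    linarith
  have step2 : Real.exp (-(mes α Rr S)) ^ n = Real.exp ((n:ℝ) * (-(mes α Rr S))) :=
    (Real.exp_nat_mul _ n).symm
  have hrp : (n:ℝ) ^ (1-γ) = (n:ℝ) ^ (-γ) * n := by
    rw [show (1-γ) = -γ + 1 by ring, Real.rpow_add hn0, Real.rpow_one]
  have step3 : (n:ℝ) * (-(mes α Rr S)) ≤ -(n:ℝ) ^ (1-γ) / 2 := by
    have h1 : (n:ℝ) ^ (1-γ) ≤ mes α Rr S * n := by
      rw [hrp]
      exact mul_le_mul_of_nonneg_right hγ hn0.le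
    have h2 : (0:ℝ) ≤ (n:ℝ) ^ (1-γ) := Real.rpow_nonneg hn0.le _
    nlinarith
  calc (1 - mes α Rr S) ^ n ≤ Real.exp (-(mes α Rr S)) ^ n := step1
    _ = Real.exp ((n:ℝ) * (-(mes α Rr S))) := step2
    _ ≤ Real.exp (-(n:ℝ) ^ (1-γ) / 2) := Real.exp_le_exp.2 step3

-- ============ geometry ============

lemma mem_hBall_origin (ρ : ℝ) (q : ℝ × ℝ) :
    q ∈ hBall origin ρ ↔ Real.cosh q.1 ≤ Real.cosh ρ := by
  simp [hBall, coshDist, origin]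

lemma coshDist_continuous (P : ℝ × ℝ) : Continuous (fun q => coshDist P q) := by
  unfold coshDist
  fun_prop

lemma hBall_measurable (P : ℝ × ℝ) (ρ : ℝ) : MeasurableSet (hBall P ρ) :=
  measurableSet_le (coshDist_continuous P).measurable measurable_const

lemma coshDist_le_of_rect (Rr : ℝ) (Q p : ℝ × ℝ) (v w Δ : ℝ)
    (hQ0 : 0 ≤ Q.1) (hQw : Q.1 ≤ w) (hp0 : 0 ≤ p.1) (hpv : p.1 ≤ v)
    (hv0 : 0 ≤ v) (hw0 : 0 ≤ w)
    (hΔ : Δ = Real.exp ((Rr - w - v)/2))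
    (hew : Real.exp w ≤ Real.exp Rr / 4) (hev : Real.exp v ≤ Real.exp Rr / 4)
    (hθ : |Q.2 - p.2| ≤ Δ) :
    coshDist Q p ≤ Real.cosh Rr := by
  have key : coshDist Q p
      = Real.cosh (Q.1 - p.1) + Real.sinh Q.1 * Real.sinh p.1 * (1 - Real.cos (Q.2 - p.2)) := by
    rw [coshDist, Real.cosh_sub]; ring
  have h1 : Real.cosh (Q.1 - p.1) ≤ Real.exp Rr / 4 := by
    have habs : |Q.1 - p.1| ≤ max w v := by
      rw [abs_le]
      constructor
      · have := le_max_right w v; linarith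
      · have := le_max_left w v; linarith
    have hch : Real.cosh (Q.1 - p.1) ≤ Real.exp (max w v) := by
      rw [Real.cosh_eq]
      have e1 : Real.exp (Q.1 - p.1) ≤ Real.exp (max w v) :=
        Real.exp_le_exp.2 (le_trans (le_abs_self _) habs)
      have e2 : Real.exp (-(Q.1 - p.1)) ≤ Real.exp (max w v) :=
        Real.exp_le_exp.2 (le_trans (neg_le_abs _) habs)
      linarith
    rcases le_total w v with h | h
    · rw [max_eq_right h] at hch; linarith
    · rw [max_eq_left h] at hch; linarith
  have hsQ : Real.sinh Q.1 ≤ Real.exp w / 2 := by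
    rw [Real.sinh_eq]
    have := Real.exp_pos (-Q.1)
    have := Real.exp_le_exp.2 hQw
    linarith
  have hsp : Real.sinh p.1 ≤ Real.exp v / 2 := by
    rw [Real.sinh_eq]
    have := Real.exp_pos (-p.1)
    have := Real.exp_le_exp.2 hpv
    linarith
  have hsQ0 : 0 ≤ Real.sinh Q.1 := Real.sinh_nonneg_iff.2 hQ0
  have hsp0 : 0 ≤ Real.sinh p.1 := Real.sinh_nonneg_iff.2 hp0
  have hcos0 : 0 ≤ 1 - Real.cos (Q.2 - p.2) := by
    have := Real.cos_le_one (Q.2 - p.2); linarith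
  have hΔ0 : 0 ≤ Δ := hΔ ▸ (Real.exp_pos _).le
  have hcos : 1 - Real.cos (Q.2 - p.2) ≤ Δ^2 / 2 := by
    have h := Real.one_sub_sq_div_two_le_cos (x := Q.2 - p.2)
    have hq : (Q.2 - p.2)^2 ≤ Δ^2 := by
      rw [← sq_abs]
      exact pow_le_pow_left₀ (abs_nonneg _) hθ 2
    linarith
  have hprod : Real.sinh Q.1 * Real.sinh p.1 * (1 - Real.cos (Q.2 - p.2))
      ≤ (Real.exp w / 2) * (Real.exp v / 2) * (Δ^2 / 2) := by
    have hwv : 0 ≤ Real.exp w / 2 * (Real.exp v / 2) := by positivity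
    apply mul_le_mul (mul_le_mul hsQ hsp hsp0 (by positivity)) hcos hcos0 hwv
  have hΔ2 : Δ^2 = Real.exp (Rr - w - v) := by
    rw [hΔ, sq, ← Real.exp_add]
    congr 1; ring
  have hexp : Real.exp w * Real.exp v * Real.exp (Rr - w - v) = Real.exp Rr := by
    rw [← Real.exp_add, ← Real.exp_add]; congr 1; ring
  have h2 : (Real.exp w / 2) * (Real.exp v / 2) * (Δ^2 / 2) = Real.exp Rr / 8 := by
    rw [hΔ2]; field_simp; linarith [hexp]
  have hcoshR : Real.exp Rr / 2 ≤ Real.cosh Rr := by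
    rw [Real.cosh_eq]
    have := Real.exp_pos (-Rr)
    linarith
  rw [key]
  rw [h2] at hprod
  linarith

set_option maxHeartbeats 1000000 in
lemma key_bound (α C γ β : ℝ) (hα0 : 0 < α) (n : ℕ) (hn1 : 1 ≤ n)
    (hR0 : 0 < Rn C n)
    (hc5 : 8 * Real.pi * Real.exp (C * β / 2) ≤ (n:ℝ) ^ (γ - β))
    (u v w : ℝ) (hu0 : 0 ≤ u) (huv : u ≤ v) (hvR : v < Rn C n)
    (hαvu : 3 ≤ α * (v - u)) (hαv : 3 ≤ α * v)
    (hwv : Rn C n ≤ w + v) (hw0 : 0 ≤ w)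
    (hew : Real.exp w ≤ Real.exp (Rn C n) / 4) (hevv : Real.exp v ≤ Real.exp (Rn C n) / 4)
    (hexp : -(Rn C n * β) / 2 ≤ α * v + (Rn C n - w - v) / 2 - α * Rn C n)
    (W : Set (ℝ × ℝ)) (hWm : MeasurableSet W)
    (hW : ∀ p : ℝ × ℝ, u < p.1 → p.1 ≤ v → p ∈ W)
    (Q : ℝ × ℝ) (hQ : validPoint (Rn C n) Q) (hQw : Q.1 ≤ w) :
    (n:ℝ) ^ (-γ) ≤ mes α (Rn C n) (hBall Q (Rn C n) ∩ W) ∧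
    (sampleMeasure α (Rn C n) n
        {x : Fin n → ℝ × ℝ | ∀ i, x i ∉ hBall Q (Rn C n) ∩ W}).toReal
      ≤ Real.exp (-(n:ℝ) ^ (1-γ) / 2) := by
  set R := Rn C n with hRdef
  have hn0 : (0:ℝ) < n := by exact_mod_cast hn1
  obtain ⟨hQ1, hQR, hQ2, hQ2'⟩ := hQ
  set Δ := Real.exp ((R - w - v)/2) with hΔdef
  have hΔ0 : 0 < Δ := Real.exp_pos _
  have hΔ1 : Δ ≤ 1 := by rw [hΔdef, Real.exp_le_one_iff]; linarith
  have hpi := Real.pi_gt_three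
  obtain ⟨θ1, θ2, h10, h12, h22, hθQ, hwidth⟩ :
      ∃ θ1 θ2 : ℝ, 0 ≤ θ1 ∧ θ1 ≤ θ2 ∧ θ2 < 2*Real.pi ∧
        (∀ t, t ∈ Set.Ioc θ1 θ2 → |Q.2 - t| ≤ Δ) ∧ θ2 - θ1 = Δ := by
    by_cases hcase : Q.2 + Δ < 2*Real.pi
    · exact ⟨Q.2, Q.2 + Δ, hQ2, by linarith, hcase,
        fun t ht => abs_le.2 ⟨by linarith [ht.1, ht.2], by linarith [ht.1, ht.2, hΔ0.le]⟩, by ring⟩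
    · push_neg at hcase
      exact ⟨Q.2 - Δ, Q.2, by linarith, by linarith, hQ2',
        fun t ht => abs_le.2 ⟨by linarith [ht.1, ht.2, hΔ0.le], by linarith [ht.1, ht.2]⟩, by ring⟩
  set rect := Set.Ioc u v ×ˢ Set.Ioc θ1 θ2 with hrect
  have hsub : rect ⊆ hBall Q R ∩ W := by
    rintro p ⟨hp1, hp2⟩
    refine ⟨?_, hW p hp1.1 hp1.2⟩
    exact coshDist_le_of_rect R Q p v w Δ hQ1 hQw (le_trans hu0 hp1.1.le) hp1.2
      (le_trans hu0 huv) hw0 hΔdef hew hevv (hθQ p.2 hp2)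
  have hmes_rect : hypMeasure α R rect
      = ENNReal.ofReal ((Real.cosh (α*v) - Real.cosh (α*u))
          / (2*Real.pi*(Real.cosh (α*R) - 1))) * ENNReal.ofReal (θ2 - θ1) :=
    hypMeasure_rect α R hα0 hR0 hu0 huv hvR h10 h12 h22
  have hcoshR1 : 1 < Real.cosh (α*R) := by rw [Real.one_lt_cosh]; positivity
  have hDpos : 0 < 2*Real.pi*(Real.cosh (α*R) - 1) := by nlinarith [Real.two_pi_pos]
  have he4 : (4:ℝ) ≤ Real.exp (α*(v-u)) := by
    have := Real.add_one_le_exp (α*(v-u)); linarith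
  have heu : Real.exp (α*u) ≤ Real.exp (α*v)/4 := by
    have hsplit : Real.exp (α*v) = Real.exp (α*u) * Real.exp (α*(v-u)) := by
      rw [← Real.exp_add]; congr 1; ring
    nlinarith [Real.exp_pos (α*u)]
  have hev4 : (4:ℝ) ≤ Real.exp (α*v) := by
    have := Real.add_one_le_exp (α*v); linarith
  have hN : Real.exp (α*v)/4 ≤ Real.cosh (α*v) - Real.cosh (α*u) := by
    rw [Real.cosh_eq, Real.cosh_eq]
    have h1 : Real.exp (-(α*u)) ≤ 1 := Real.exp_le_one_iff.2 (by nlinarith)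
    have h2 : 0 < Real.exp (-(α*v)) := Real.exp_pos _
    linarith
  have hNpos : (0:ℝ) < Real.exp (α*v)/4 := by positivity
  have hDle : 2*Real.pi*(Real.cosh (α*R) - 1) ≤ 2*Real.pi*Real.exp (α*R) := by
    have hch : Real.cosh (α*R) ≤ Real.exp (α*R) := by
      rw [Real.cosh_eq]
      have h1 : Real.exp (-(α*R)) ≤ Real.exp (α*R) :=
        Real.exp_le_exp.2 (by nlinarith)
      linarith
    nlinarith [Real.two_pi_pos]
  have hfrac : Real.exp (α*v)/4 / (2*Real.pi*Real.exp (α*R))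
      ≤ (Real.cosh (α*v) - Real.cosh (α*u)) / (2*Real.pi*(Real.cosh (α*R) - 1)) :=
    div_le_div₀ (by linarith) hN hDpos hDle
  have hval : Real.exp (α*v)/4 / (2*Real.pi*Real.exp (α*R)) * Δ
      = Real.exp (α*v + (R-w-v)/2 - α*R) / (8*Real.pi) := by
    rw [hΔdef, show α*v + (R-w-v)/2 - α*R = α*v + (R-w-v)/2 + (-(α*R)) by ring,
      Real.exp_add, Real.exp_add, Real.exp_neg]
    have := Real.exp_pos (α*R)
    have := Real.pi_pos
    field_simp
    ring
  have hlow : (n:ℝ)^(-γ) ≤ Real.exp (α*v + (R-w-v)/2 - α*R) / (8*Real.pi) := by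
    have hexpR : Real.exp (-(R*β)/2) = (n:ℝ)^(-β) * Real.exp (-(C*β)/2) := by
      rw [Real.rpow_def_of_pos hn0, ← Real.exp_add]
      congr 1
      rw [hRdef, Rn]; ring
    have hrw : (n:ℝ)^(-γ) * (n:ℝ)^(γ-β) = (n:ℝ)^(-β) := by
      rw [← Real.rpow_add hn0]; congr 1; ring
    have hpos : (0:ℝ) < (n:ℝ)^(-γ) := Real.rpow_pos_of_pos hn0 _
    have hEpos : (0:ℝ) < Real.exp (C*β/2) := Real.exp_pos _
    have h2 : (n:ℝ)^(-γ) * (8*Real.pi*Real.exp (C*β/2)) ≤ (n:ℝ)^(-β) := by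
      calc (n:ℝ)^(-γ) * (8*Real.pi*Real.exp (C*β/2))
          ≤ (n:ℝ)^(-γ) * (n:ℝ)^(γ-β) := mul_le_mul_of_nonneg_left hc5 hpos.le
        _ = (n:ℝ)^(-β) := hrw
    have h3 : (n:ℝ)^(-γ) ≤ Real.exp (-(R*β)/2) / (8*Real.pi) := by
      rw [hexpR, show Real.exp (-(C*β)/2) = (Real.exp (C*β/2))⁻¹ by
        rw [← Real.exp_neg]; congr 1; ring]
      rw [le_div_iff₀ (by positivity : (0:ℝ) < 8*Real.pi)]
      calc (n:ℝ)^(-γ) * (8*Real.pi)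
          = (n:ℝ)^(-γ) * (8*Real.pi*Real.exp (C*β/2)) * (Real.exp (C*β/2))⁻¹ := by
            field_simp
        _ ≤ (n:ℝ)^(-β) * (Real.exp (C*β/2))⁻¹ :=
            mul_le_mul_of_nonneg_right h2 (inv_nonneg.2 hEpos.le)
    refine le_trans h3 ?_
    have hmono := Real.exp_le_exp.2 hexp
    have h8 : (0:ℝ) < 8*Real.pi := by positivity
    exact (div_le_div_iff_of_pos_right h8).2 hmono
  have hNnonneg : (0:ℝ) ≤ (Real.cosh (α*v) - Real.cosh (α*u)) / (2*Real.pi*(Real.cosh (α*R) - 1)) :=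
    div_nonneg (by linarith) hDpos.le
  have hmes_val : mes α R rect
      = (Real.cosh (α*v) - Real.cosh (α*u)) / (2*Real.pi*(Real.cosh (α*R) - 1)) * Δ := by
    rw [mes, hmes_rect, hwidth, ← ENNReal.ofReal_mul hNnonneg,
      ENNReal.toReal_ofReal (mul_nonneg hNnonneg hΔ0.le)]
  have hfinal1 : (n:ℝ)^(-γ) ≤ mes α R (hBall Q R ∩ W) := by
    calc (n:ℝ)^(-γ) ≤ Real.exp (α*v + (R-w-v)/2 - α*R) / (8*Real.pi) := hlow
      _ = Real.exp (α*v)/4 / (2*Real.pi*Real.exp (α*R)) * Δ := hval.symm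
      _ ≤ (Real.cosh (α*v) - Real.cosh (α*u)) / (2*Real.pi*(Real.cosh (α*R) - 1)) * Δ :=
          mul_le_mul_of_nonneg_right hfrac hΔ0.le
      _ = mes α R rect := hmes_val.symm
      _ ≤ mes α R (hBall Q R ∩ W) := mes_mono α R hα0 hR0 hsub
  exact ⟨hfinal1,
    prob_avoid α R hα0 hR0 n hn1 _ ((hBall_measurable Q R).inter hWm) γ hfinal1⟩


set_option maxHeartbeats 1000000 in
/-- Vertices between the modified bands `R'_j` have, with probability
super-polynomially close to one, a neighbor in the next band (Lemma 3.5 of the paper). -/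
theorem close_center (α C : ℝ) (hα : 1/2 < α) (hα' : α < 1)
    (j0 : ℕ) (hj0 : 1 ≤ j0)
    (hj0' : ∀ j : ℕ, j0 ≤ j → Real.exp (-(α ^ j) / 2) ≤ 1 - (1 - (1 - α)/2) * α ^ j / 2)
    (c : ℝ) (hc : c = Real.exp (-(α ^ j0) / 2)) (hc1 : 1/2 < c) (hc2 : c < 1)
    (T : ℕ) (hT1 : 1 ≤ T)
    (hT : 1/2 < c - (T : ℝ) / 2 * (1 - c) * (1 - α))
    (hT' : ¬ (1/2 < c - ((T : ℝ) + 1) / 2 * (1 - c) * (1 - α))) :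
    ∃ γ : ℝ, 0 < γ ∧ γ < 1 ∧ ∃ n₀ : ℕ, ∀ n ≥ n₀,
      (∀ j : ℕ, 1 ≤ j → j ≤ T - 1 → ∀ Q : ℝ × ℝ, validPoint (Rn C n) Q →
        Rp α C c n j < Q.1 → Q.1 ≤ Rp α C c n ((j : ℝ) - 1) →
        (n : ℝ) ^ (-γ) ≤
          mes α (Rn C n) (hBall Q (Rn C n) ∩
            (hBall origin (Rp α C c n j) \ hBall origin (Rp α C c n ((j : ℝ) + 1)))) ∧
        (sampleMeasure α (Rn C n) n
          {x : Fin n → ℝ × ℝ | ∀ i : Fin n,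
            x i ∉ hBall Q (Rn C n) ∩
              (hBall origin (Rp α C c n j) \ hBall origin (Rp α C c n ((j : ℝ) + 1)))}).toReal
          ≤ Real.exp (-(n : ℝ) ^ (1 - γ) / 2)) ∧
      (∀ Q : ℝ × ℝ, validPoint (Rn C n) Q →
        Rp α C c n T < Q.1 → Q.1 ≤ Rp α C c n ((T : ℝ) - 1) →
        (n : ℝ) ^ (-γ) ≤
          mes α (Rn C n) (hBall Q (Rn C n) ∩ hBall origin (Rn C n / 2)) ∧
        (sampleMeasure α (Rn C n) n
          {x : Fin n → ℝ × ℝ | ∀ i : Fin n,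
            x i ∉ hBall Q (Rn C n) ∩ hBall origin (Rn C n / 2)}).toReal
          ≤ Real.exp (-(n : ℝ) ^ (1 - γ) / 2)) := by
  have hα0 : (0:ℝ) < α := by linarith only [hα]
  have hc0 : (0:ℝ) < c := by linarith only [hc1]
  obtain ⟨s, hs_def⟩ : ∃ zz : ℝ, zz = (1 - c) * (1 - α) / 2 := ⟨_, rfl⟩
  have h1c : (0:ℝ) < 1 - c := by linarith only [hc2]
  have h1a : (0:ℝ) < 1 - α := by linarith only [hα']
  have hs0 : 0 < s := by rw [hs_def]; positivity
  have hT2 : 1/2 < c - (T:ℝ)*s := by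
    have heq : (T:ℝ)/2*(1-c)*(1-α) = (T:ℝ)*s := by rw [hs_def]; ring
    linarith only [hT, heq]
  have hT3 : c - ((T:ℝ)+1)*s ≤ 1/2 := by
    push_neg at hT'
    have heq : ((T:ℝ)+1)/2*(1-c)*(1-α) = ((T:ℝ)+1)*s := by rw [hs_def]; ring
    linarith only [hT', heq]
  obtain ⟨β₁, hβ₁def⟩ : ∃ zz : ℝ, zz = c*(2-2*α) + s*(2*α-1) + 2*α - 1 := ⟨_, rfl⟩
  obtain ⟨β₂, hβ₂def⟩ : ∃ zz : ℝ, zz = α + 2*s := ⟨_, rfl⟩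
  obtain ⟨β, hβdef⟩ : ∃ zz : ℝ, zz = max β₁ β₂ := ⟨_, rfl⟩
  have hβ1lt : β₁ < 1 := by
    have hprod : (0:ℝ) < (1-c)*((1-α)*(5-2*α)) :=
      mul_pos h1c (mul_pos h1a (by linarith only [hα']))
    rw [hβ₁def, hs_def]
    linarith only [hprod]
  have hβ2lt : β₂ < 1 := by
    have hprod : (0:ℝ) < c*(1-α) := mul_pos hc0 h1a
    rw [hβ₂def, hs_def]
    linarith only [hprod]
  have hβlt : β < 1 := by rw [hβdef]; exact max_lt hβ1lt hβ2lt
  obtain ⟨γ, hγdef⟩ : ∃ zz : ℝ, zz = (max β (1/2) + 1)/2 := ⟨_, rfl⟩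
  have hγ0 : 0 < γ := by
    have h := le_max_right β (1/2)
    rw [hγdef]; linarith only [h]
  have hγ1 : γ < 1 := by
    have h := max_lt hβlt (by norm_num : (1:ℝ)/2 < 1)
    rw [hγdef]; linarith only [h]
  have hβγ : β < γ := by
    have h1 := le_max_left β (1/2)
    have h2 := max_lt hβlt (by norm_num : (1:ℝ)/2 < 1)
    rw [hγdef]; linarith only [h1, h2]
  refine ⟨γ, hγ0, hγ1, ?_⟩
  have hRtop : Tendsto (fun n : ℕ => Rn C n) atTop atTop := by
    have h1 : Tendsto (fun n : ℕ => Real.log (n:ℝ)) atTop atTop :=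
      Real.tendsto_log_atTop.comp tendsto_natCast_atTop_atTop
    have h2 := h1.const_mul_atTop (show (0:ℝ) < 2 by norm_num)
    exact tendsto_atTop_add_const_right atTop C h2
  have ev1 : ∀ᶠ n : ℕ in atTop, 0 < Rn C n := hRtop.eventually_gt_atTop 0
  have ev2 : ∀ᶠ n : ℕ in atTop, 3 ≤ Rn C n * (1-c) :=
    (hRtop.atTop_mul_const h1c).eventually_ge_atTop 3
  have ev3 : ∀ᶠ n : ℕ in atTop, 3 ≤ α * (Rn C n * s) :=
    ((hRtop.atTop_mul_const hs0).const_mul_atTop hα0).eventually_ge_atTop 3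
  have ev4 : ∀ᶠ n : ℕ in atTop, 12 ≤ α * Rn C n :=
    (hRtop.const_mul_atTop hα0).eventually_ge_atTop 12
  have ev5 : ∀ᶠ n : ℕ in atTop, 8*Real.pi*Real.exp (C*β/2) ≤ (n:ℝ)^(γ-β) :=
    ((tendsto_rpow_atTop (by linarith only [hβγ] : (0:ℝ) < γ-β)).comp
      tendsto_natCast_atTop_atTop).eventually_ge_atTop _
  have ev6 : ∀ᶠ n : ℕ in atTop, 1 ≤ n := eventually_ge_atTop 1
  obtain ⟨n₀, hn₀⟩ :=
    eventually_atTop.mp (((((ev1.and ev2).and ev3).and ev4).and ev5).and ev6)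
  refine ⟨n₀, ?_⟩
  intro n hn
  obtain ⟨⟨⟨⟨⟨hR0, hcc2⟩, hcc3⟩, hcc4⟩, hcc5⟩, hn1⟩ := hn₀ n hn
  have hRp : ∀ i : ℝ, Rp α C c n i = Rn C n * (c - i*s) := fun i => by
    rw [Rp, hs_def]; ring
  have hAmono : ∀ x y : ℝ, x ≤ y → c - y*s ≤ c - x*s := fun x y h => by
    have hp := mul_nonneg (sub_nonneg.2 h) hs0.le
    linarith only [hp]
  have hecR : Real.exp (c*Rn C n) ≤ Real.exp (Rn C n) / 4 := by
    have h4 : (4:ℝ) ≤ Real.exp (Rn C n*(1-c)) := by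
      have h := Real.add_one_le_exp (Rn C n*(1-c))
      linarith only [h, hcc2]
    have hsplit : Real.exp (Rn C n) = Real.exp (c*Rn C n) * Real.exp (Rn C n*(1-c)) := by
      rw [← Real.exp_add]; congr 1; ring
    have hkey : 0 ≤ Real.exp (c*Rn C n) * (Real.exp (Rn C n*(1-c)) - 4) :=
      mul_nonneg (Real.exp_pos _).le (by linarith only [h4])
    linarith only [hkey, hsplit]
  have hexpmono : ∀ t : ℝ, t ≤ c*Rn C n → Real.exp t ≤ Real.exp (Rn C n) / 4 :=
    fun t ht => le_trans (Real.exp_le_exp.2 ht) hecR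
  constructor
  · -- case (i)
    intro j hj1 hjT Q hQ hQlow hQhigh
    have hjT' : j + 1 ≤ T := by omega
    have hjr1 : 1 ≤ (j:ℝ) := by exact_mod_cast hj1
    have hjrT : (j:ℝ) + 1 ≤ (T:ℝ) := by exact_mod_cast hjT'
    obtain ⟨x, hxdef⟩ : ∃ zz : ℝ, zz = c - ((j:ℝ)-1)*s := ⟨_, rfl⟩
    have hxc : x ≤ c := by
      have hp := mul_nonneg (show (0:ℝ) ≤ (j:ℝ)-1 by linarith only [hjr1]) hs0.le
      rw [hxdef]; linarith only [hp]
    have hAj1 : 1/2 < c - ((j:ℝ)+1)*s :=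
      lt_of_lt_of_le hT2 (hAmono _ _ (by linarith only [hjrT]))
    have hAj : 1/2 < c - (j:ℝ)*s :=
      lt_of_lt_of_le hT2 (hAmono _ _ (by linarith only [hjrT]))
    have hAw : 1/2 < x := by
      rw [hxdef]
      exact lt_of_lt_of_le hT2 (hAmono _ _ (by linarith only [hjrT]))
    have hv_eq : Rp α C c n (j:ℝ) = Rn C n * (x - s) := by rw [hRp, hxdef]; ring
    have hw_eq : Rp α C c n ((j:ℝ)-1) = Rn C n * x := by rw [hRp, hxdef]
    have hu_eq : Rp α C c n ((j:ℝ)+1) = Rn C n * (x - 2*s) := by rw [hRp, hxdef]; ring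
    have hxs : 1/2 < x - s := by
      have h : c - (j:ℝ)*s = x - s := by rw [hxdef]; ring
      exact h ▸ hAj
    have hx2s : 1/2 < x - 2*s := by
      have h : c - ((j:ℝ)+1)*s = x - 2*s := by rw [hxdef]; ring
      exact h ▸ hAj1
    have hu0' : 0 ≤ Rp α C c n ((j:ℝ)+1) := by
      rw [hu_eq]; exact mul_nonneg hR0.le (by linarith only [hx2s])
    have hv0' : (0:ℝ) ≤ Rp α C c n (j:ℝ) := by
      rw [hv_eq]; exact mul_nonneg hR0.le (by linarith only [hxs])
    have huv' : Rp α C c n ((j:ℝ)+1) ≤ Rp α C c n (j:ℝ) := by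
      rw [hu_eq, hv_eq]
      exact mul_le_mul_of_nonneg_left (by linarith only [hs0]) hR0.le
    have hvR' : Rp α C c n (j:ℝ) < Rn C n := by
      rw [hv_eq]
      have h := mul_lt_mul_of_pos_left
        (show x - s < 1 by linarith only [hxc, hs0, hc2]) hR0
      simpa using h
    have havu : 3 ≤ α * (Rp α C c n (j:ℝ) - Rp α C c n ((j:ℝ)+1)) := by
      rw [hu_eq, hv_eq, (by ring : Rn C n*(x-s) - Rn C n*(x-2*s) = Rn C n*s)]
      exact hcc3
    have hav : 3 ≤ α * Rp α C c n (j:ℝ) := by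
      rw [hv_eq]
      have h1 : Rn C n*(1/2) ≤ Rn C n*(x-s) :=
        mul_le_mul_of_nonneg_left (by linarith only [hxs]) hR0.le
      have h2 : α*(Rn C n*(1/2)) ≤ α*(Rn C n*(x-s)) := mul_le_mul_of_nonneg_left h1 hα0.le
      linarith only [h2, hcc4]
    have hwv : Rn C n ≤ Rp α C c n ((j:ℝ)-1) + Rp α C c n (j:ℝ) := by
      rw [hv_eq, hw_eq]
      have h1 : Rn C n*1 ≤ Rn C n*(x + (x-s)) :=
        mul_le_mul_of_nonneg_left (by linarith only [hAw, hxs]) hR0.le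
      linarith only [h1]
    have hw0' : 0 ≤ Rp α C c n ((j:ℝ)-1) := by
      rw [hw_eq]; exact mul_nonneg hR0.le (by linarith only [hAw])
    have hwc' : Rp α C c n ((j:ℝ)-1) ≤ c * Rn C n := by
      rw [hw_eq]
      have h := mul_le_mul_of_nonneg_left hxc hR0.le
      linarith only [h]
    have hvc' : Rp α C c n (j:ℝ) ≤ c * Rn C n := by
      rw [hv_eq]
      have h := mul_le_mul_of_nonneg_left
        (show x - s ≤ c by linarith only [hxc, hs0]) hR0.le
      linarith only [h]
    have hexp' : -(Rn C n * β)/2 ≤ α * Rp α C c n (j:ℝ)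
        + (Rn C n - Rp α C c n ((j:ℝ)-1) - Rp α C c n (j:ℝ))/2 - α * Rn C n := by
      have hβ₁β : β₁ ≤ β := by rw [hβdef]; exact le_max_left _ _
      have hpt : -β₁/2 ≤ α*(x-s) + (1 - x - (x-s))/2 - α := by
        have hprod : 0 ≤ (c-x)*(1-α) :=
          mul_nonneg (by linarith only [hxc]) (by linarith only [hα'])
        rw [hβ₁def]
        linarith only [hprod]
      have hstep := mul_le_mul_of_nonneg_left hpt hR0.le
      have hββ := mul_le_mul_of_nonneg_left hβ₁β hR0.le
      calc -(Rn C n * β)/2 ≤ -(Rn C n * β₁)/2 := by linarith only [hββ]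
        _ = Rn C n * (-β₁/2) := by ring
        _ ≤ Rn C n * (α*(x-s) + (1 - x - (x-s))/2 - α) := hstep
        _ = α * Rp α C c n (j:ℝ) + (Rn C n - Rp α C c n ((j:ℝ)-1) - Rp α C c n (j:ℝ))/2
            - α * Rn C n := by rw [hv_eq, hw_eq]; ring
    have hW' : ∀ p : ℝ × ℝ, Rp α C c n ((j:ℝ)+1) < p.1 → p.1 ≤ Rp α C c n (j:ℝ) →
        p ∈ hBall origin (Rp α C c n (j:ℝ)) \ hBall origin (Rp α C c n ((j:ℝ)+1)) := by
      intro p hpu hpv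
      constructor
      · refine (mem_hBall_origin _ _).2 (Real.cosh_le_cosh.2 ?_)
        rw [abs_of_nonneg (by linarith only [hu0', hpu] : (0:ℝ) ≤ p.1), abs_of_nonneg hv0']
        exact hpv
      · intro hmem
        have h1 := (mem_hBall_origin _ _).1 hmem
        rw [Real.cosh_le_cosh] at h1
        have h2 : p.1 ≤ |Rp α C c n ((j:ℝ)+1)| := le_trans (le_abs_self _) h1
        rw [abs_of_nonneg hu0'] at h2
        linarith only [h2, hpu]
    exact key_bound α C γ β hα0 n hn1 hR0 hcc5
      (Rp α C c n ((j:ℝ)+1)) (Rp α C c n (j:ℝ)) (Rp α C c n ((j:ℝ)-1))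
      hu0' huv' hvR' havu hav hwv hw0'
      (hexpmono _ hwc') (hexpmono _ hvc') hexp'
      (hBall origin (Rp α C c n (j:ℝ)) \ hBall origin (Rp α C c n ((j:ℝ)+1)))
      ((hBall_measurable _ _).diff (hBall_measurable _ _))
      hW' Q hQ hQhigh
  · -- case (ii)
    intro Q hQ hQlow hQhigh
    have hTr1 : 1 ≤ (T:ℝ) := by exact_mod_cast hT1
    obtain ⟨y, hydef⟩ : ∃ zz : ℝ, zz = c - ((T:ℝ)-1)*s := ⟨_, rfl⟩
    have hyc : y ≤ c := by
      have hp := mul_nonneg (show (0:ℝ) ≤ (T:ℝ)-1 by linarith only [hTr1]) hs0.le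
      rw [hydef]; linarith only [hp]
    have hyT : y ≤ 1/2 + 2*s := by
      have h : c - ((T:ℝ)+1)*s = y - 2*s := by rw [hydef]; ring
      have h2 := h ▸ hT3
      linarith only [h2]
    have hyhalf : 1/2 < y := by
      rw [hydef]
      exact lt_of_lt_of_le hT2 (hAmono _ _ (by linarith only [hTr1]))
    have hw_eq : Rp α C c n ((T:ℝ)-1) = Rn C n * y := by rw [hRp, hydef]
    have hw0' : 0 ≤ Rp α C c n ((T:ℝ)-1) := by
      rw [hw_eq]; exact mul_nonneg hR0.le (by linarith only [hyhalf])
    have hwc' : Rp α C c n ((T:ℝ)-1) ≤ c * Rn C n := by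
      rw [hw_eq]
      have h := mul_le_mul_of_nonneg_left hyc hR0.le
      linarith only [h]
    have hvc' : Rn C n / 2 ≤ c * Rn C n := by
      have h := mul_le_mul_of_nonneg_left hc1.le hR0.le
      linarith only [h]
    have hwv : Rn C n ≤ Rp α C c n ((T:ℝ)-1) + Rn C n / 2 := by
      rw [hw_eq]
      have h1 : Rn C n*(1/2) ≤ Rn C n*y :=
        mul_le_mul_of_nonneg_left (by linarith only [hyhalf]) hR0.le
      linarith only [h1]
    have hexp' : -(Rn C n * β)/2 ≤ α * (Rn C n / 2)
        + (Rn C n - Rp α C c n ((T:ℝ)-1) - Rn C n / 2)/2 - α * Rn C n := by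
      have hβ₂β : β₂ ≤ β := by rw [hβdef]; exact le_max_right _ _
      have hpt : -β₂/2 ≤ α*(1/2:ℝ) + (1 - y - 1/2)/2 - α := by
        rw [hβ₂def]; linarith only [hyT]
      have hstep := mul_le_mul_of_nonneg_left hpt hR0.le
      have hββ := mul_le_mul_of_nonneg_left hβ₂β hR0.le
      calc -(Rn C n * β)/2 ≤ -(Rn C n * β₂)/2 := by linarith only [hββ]
        _ = Rn C n * (-β₂/2) := by ring
        _ ≤ Rn C n * (α*(1/2:ℝ) + (1 - y - 1/2)/2 - α) := hstep
        _ = α * (Rn C n / 2) + (Rn C n - Rp α C c n ((T:ℝ)-1) - Rn C n / 2)/2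
            - α * Rn C n := by rw [hw_eq]; ring
    have hW' : ∀ p : ℝ × ℝ, Rn C n / 4 < p.1 → p.1 ≤ Rn C n / 2 →
        p ∈ hBall origin (Rn C n / 2) := by
      intro p hpu hpv
      refine (mem_hBall_origin _ _).2 (Real.cosh_le_cosh.2 ?_)
      rw [abs_of_nonneg (by linarith only [hR0, hpu] : (0:ℝ) ≤ p.1),
        abs_of_nonneg (by linarith only [hR0] : (0:ℝ) ≤ Rn C n / 2)]
      exact hpv
    exact key_bound α C γ β hα0 n hn1 hR0 hcc5
      (Rn C n / 4) (Rn C n / 2) (Rp α C c n ((T:ℝ)-1))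
      (by linarith only [hR0]) (by linarith only [hR0]) (by linarith only [hR0])
      (by linarith only [hcc4]) (by linarith only [hcc4]) hwv hw0'
      (hexpmono _ hwc') (hexpmono _ hvc') hexp'
      (hBall origin (Rn C n / 2)) (hBall_measurable _ _)
      hW' Q hQ hQhigh
end

section
/- Let 0 < c₃ < c₁ < c₂ be constants with 2e^{c₁−c₂} > e^{c₃/2}. There exist a constant c > 0 and n₀ ∈ ℕ such that for all n ≥ n₀ and all points A, B with R − c₂ ≤ r_A ≤ R − c₁, R − c₂ ≤ r_B ≤ R − c₁, and R − c₃ ≤ d(A,B) ≤ R: μ([(B_B(R) \ B_B(R − c₃)) ∩ (B_O(R − c₁) \ B_O(R − c₂))] \ B_A(R)) ≥ c e^{−R/2}. -/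
open Real MeasureTheory Filter

/- ===== auxiliary lemmas ===== -/

section Aux
open Real

lemma eps_pow {ε : ℝ} (h0 : 0 ≤ ε) (h1 : ε ≤ 1/16) :
    1 + ε ≤ (1-ε)^4 * (1+ε)^6 := by
  have b1 : 1 - 4*ε^2 ≤ (1-ε^2)^4 := by
    nlinarith [sq_nonneg (ε^2), sq_nonneg ε, sq_nonneg (ε^2 - 2)]
  have b0 : 0 ≤ 1 - 3*ε - 8*ε^2 - 4*ε^3 := by
    nlinarith [mul_nonneg h0 h0, mul_nonneg (mul_nonneg h0 h0) h0]
  have b2 : 1 + ε ≤ (1 - 4*ε^2) * (1+ε)^2 := by nlinarith [mul_nonneg h0 b0]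
  have b3 : (1 - 4*ε^2) * (1+ε)^2 ≤ (1-ε^2)^4 * (1+ε)^2 :=
    mul_le_mul_of_nonneg_right b1 (by positivity)
  have b4 : (1-ε^2)^4 * (1+ε)^2 = (1-ε)^4 * (1+ε)^6 := by ring
  linarith

lemma F1_lem {ε : ℝ} (h0 : 0 ≤ ε) (h1 : ε ≤ 1/16) :
    (1+ε)^3 * Real.exp (ε/2) ≤ 1 + 7*ε := by
  have h2 : Real.exp (ε/2) ≤ 1 + ε := by
    have h3 : 1 - ε/2 ≤ Real.exp (-(ε/2)) := by
      have := Real.add_one_le_exp (-(ε/2)); linarith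
    have h4 : Real.exp (ε/2) * Real.exp (-(ε/2)) = 1 := by
      rw [← Real.exp_add]; simp
    have h5 : 0 < Real.exp (ε/2) := Real.exp_pos _
    nlinarith
  have h6 : (1+ε)^3 ≤ 1 + 4*ε := by
    nlinarith [sq_nonneg ε, mul_nonneg h0 (mul_nonneg h0 h0)]
  have h7 : (0:ℝ) < 1 + ε := by linarith
  nlinarith [Real.exp_pos (ε/2)]

lemma sinh_lb {x ε : ℝ} (hε : 0 ≤ ε) (h : Real.exp (-(2*x)) ≤ ε) :
    (1-ε) * Real.exp x / 2 ≤ Real.sinh x := by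
  rw [Real.sinh_eq]
  have h1 : Real.exp (-x) = Real.exp x * Real.exp (-(2*x)) := by
    rw [← Real.exp_add]; ring_nf
  have h2 : Real.exp (-x) ≤ Real.exp x * ε := by
    rw [h1]; exact mul_le_mul_of_nonneg_left h (Real.exp_pos x).le
  nlinarith [Real.exp_pos x]

lemma sinh_ub (x : ℝ) : Real.sinh x ≤ Real.exp x / 2 := by
  rw [Real.sinh_eq]; nlinarith [Real.exp_pos (-x)]

lemma cosh_lb (x : ℝ) : Real.exp x / 2 ≤ Real.cosh x := by
  rw [Real.cosh_eq]; nlinarith [Real.exp_pos (-x)]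

lemma cosh_ub {x ε : ℝ} (h : 2 ≤ ε * Real.exp x) (hx : 0 ≤ x) :
    Real.cosh x ≤ (1+ε) * Real.exp x / 2 := by
  rw [Real.cosh_eq]
  have h1 : Real.exp (-x) ≤ 1 := Real.exp_le_one_iff.2 (by linarith)
  nlinarith [Real.exp_pos x]

lemma cosh_ub0 {x : ℝ} (hx : 0 ≤ x) : Real.cosh x ≤ (Real.exp x + 1) / 2 := by
  rw [Real.cosh_eq]
  have h1 : Real.exp (-x) ≤ 1 := Real.exp_le_one_iff.2 (by linarith)
  linarith

lemma one_sub_cos (ψ : ℝ) : 1 - Real.cos ψ = 2 * Real.sin (ψ/2)^2 := by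
  have h := Real.sin_sq_eq_half_sub (ψ/2)
  rw [h, show 2 * (ψ/2) = ψ by ring]; ring

lemma sin_half_lb {ψ ε : ℝ} (hψ0 : 0 < ψ) (hψ1 : ψ ≤ 1) (hψε : ψ^2 ≤ 4*ε) :
    (1-ε) * (ψ/2) ≤ Real.sin (ψ/2) := by
  have h := Real.sin_gt_sub_cube (by linarith : (0:ℝ) < ψ/2)
  nlinarith

lemma sin_sq_ub {ψ : ℝ} (hψ0 : 0 ≤ ψ) (hψπ : ψ ≤ 2) :
    Real.sin (ψ/2)^2 ≤ (ψ/2)^2 := by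
  have h1 : Real.sin (ψ/2) ≤ ψ/2 := Real.sin_le (by linarith)
  have h2 : 0 ≤ Real.sin (ψ/2) := Real.sin_nonneg_of_nonneg_of_le_pi (by linarith)
    (by nlinarith [Real.pi_gt_three])
  nlinarith

lemma chainLB (Eb Ep Sb Sp si ψ cc ε : ℝ) (hε0 : 0 ≤ ε) (hε1 : ε ≤ 1/16)
    (hEb : 0 < Eb) (hEp : 0 < Ep) (hψ0 : 0 ≤ ψ)
    (h1 : (1-ε)*Eb/2 ≤ Sb) (h2 : (1-ε)*Ep/2 ≤ Sp)
    (h3 : (1-ε)*(ψ/2) ≤ si)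
    (hψ : 4*(1+ε)^6 * cc ≤ ψ^2 * (Eb * Ep))
    (hcc : 0 ≤ cc) :
    (1+ε) * cc / 2 ≤ 2 * Sb * Sp * si^2 := by
  have hε' : (0:ℝ) < 1 - ε := by linarith
  have hSb : 0 ≤ Sb := le_trans (by positivity) h1
  have hSp : 0 ≤ Sp := le_trans (by positivity) h2
  have hA : (1-ε)*Eb/2 * ((1-ε)*Ep/2) ≤ Sb * Sp :=
    mul_le_mul h1 h2 (by positivity) hSb
  have hB : ((1-ε)*(ψ/2))^2 ≤ si^2 := by
    have h0 : 0 ≤ (1-ε)*(ψ/2) := by positivity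
    nlinarith
  have hC : ((1-ε)*Eb/2 * ((1-ε)*Ep/2)) * ((1-ε)*(ψ/2))^2 ≤ (Sb * Sp) * si^2 :=
    mul_le_mul hA hB (by positivity) (mul_nonneg hSb hSp)
  have hD : (1-ε)^4 * (4*(1+ε)^6 * cc) ≤ (1-ε)^4 * (ψ^2 * (Eb * Ep)) :=
    mul_le_mul_of_nonneg_left hψ (by positivity)
  have hE := eps_pow hε0 hε1
  have hE2 : (1+ε) * cc ≤ ((1-ε)^4 * (1+ε)^6) * cc :=
    mul_le_mul_of_nonneg_right hE hcc
  nlinarith [hC, hD, hE2]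

lemma chainUB (Eb Ep Sb Sp si ψ : ℝ)
    (hEb : 0 < Eb) (hEp : 0 < Ep) (hψ0 : 0 ≤ ψ)
    (h1 : Sb ≤ Eb/2) (h2 : Sp ≤ Ep/2) (hSb : 0 ≤ Sb) (hSp : 0 ≤ Sp)
    (h3 : si^2 ≤ (ψ/2)^2) (hsi : 0 ≤ si^2) :
    2 * Sb * Sp * si^2 ≤ ψ^2 * (Eb * Ep) / 8 := by
  have hA : Sb * Sp ≤ Eb/2 * (Ep/2) := mul_le_mul h1 h2 hSp (by positivity)
  have hC : (Sb * Sp) * si^2 ≤ (Eb/2 * (Ep/2)) * (ψ/2)^2 :=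
    mul_le_mul hA h3 hsi (by positivity)
  nlinarith [hC]

lemma cos_transfer (g φ ψ σ : ℝ) (hσ : σ = 1 ∨ σ = -1)
    (hc : Real.cos g = Real.cos φ) (hs : σ * Real.sin g = Real.sin φ) :
    Real.cos (σ * (φ + ψ) - g) = Real.cos ψ := by
  have h1 : Real.cos (σ * (φ + ψ)) = Real.cos (φ + ψ) := by
    rcases hσ with h | h
    · rw [h, one_mul]
    · rw [h, neg_one_mul, Real.cos_neg]
  have h2 : Real.sin (σ * (φ + ψ)) = σ * Real.sin (φ + ψ) := by
    rcases hσ with h | h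
    · rw [h, one_mul, one_mul]
    · rw [h, neg_one_mul, Real.sin_neg, neg_one_mul]
  rw [Real.cos_sub, h1, h2, hc]
  have h3 : σ * Real.sin (φ + ψ) * Real.sin g = Real.sin (φ + ψ) * (σ * Real.sin g) := by ring
  rw [h3, hs, ← Real.cos_sub]
  congr 1
  ring

lemma exists_shift (u w : ℝ) (hw : 0 < w) (hw1 : w ≤ 1) :
    ∃ t₁ : ℝ, 0 ≤ t₁ ∧ t₁ + w / 4 < 2 * Real.pi ∧
      ∀ θ ∈ Set.Icc t₁ (t₁ + w / 4), ∃ M : ℤ, θ + M * (2 * Real.pi) ∈ Set.Icc u (u + w) := by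
  have hpi := Real.pi_gt_three
  have h2pi : (0:ℝ) < 2 * Real.pi := by linarith
  set k : ℤ := ⌊u / (2 * Real.pi)⌋ with hk
  set u' : ℝ := u - 2 * Real.pi * k with hu'
  have hu'0 : 0 ≤ u' := by
    have h := Int.floor_le (u / (2 * Real.pi))
    have h2 : (k:ℝ) * (2 * Real.pi) ≤ u := by
      calc (k:ℝ) * (2 * Real.pi) ≤ u / (2 * Real.pi) * (2 * Real.pi) :=
            mul_le_mul_of_nonneg_right h (le_of_lt h2pi)
        _ = u := by field_simp
    rw [hu']; linarith
  have hu'2 : u' < 2 * Real.pi := by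
    have h := Int.lt_floor_add_one (u / (2 * Real.pi))
    have h2 : u < ((k:ℝ) + 1) * (2 * Real.pi) := by
      calc u = u / (2 * Real.pi) * (2 * Real.pi) := by field_simp
        _ < ((k:ℝ) + 1) * (2 * Real.pi) := mul_lt_mul_of_pos_right h h2pi
    rw [hu']; nlinarith
  by_cases hcase : w / 2 ≤ 2 * Real.pi - u'
  · refine ⟨u', hu'0, by linarith, fun θ hθ => ⟨k, ?_⟩⟩
    constructor
    · have := hθ.1; push_cast; nlinarith
    · have := hθ.2; push_cast; nlinarith
  · refine ⟨0, le_refl _, by linarith, fun θ hθ => ⟨k + 1, ?_⟩⟩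
    push_neg at hcase
    constructor
    · have := hθ.1; push_cast; nlinarith
    · have := hθ.2; push_cast; nlinarith

lemma cdist_formula (r₁ r₂ θ ψ : ℝ) (h : Real.cos θ = Real.cos ψ) :
    Real.cosh r₁ * Real.cosh r₂ - Real.sinh r₁ * Real.sinh r₂ * Real.cos θ
      = Real.cosh (r₁ - r₂) + Real.sinh r₁ * Real.sinh r₂ * (2 * Real.sin (ψ/2)^2) := by
  rw [h, Real.cosh_sub, ← one_sub_cos ψ]; ring

lemma rn_large (C R0 : ℝ) : ∃ n₀ : ℕ, ∀ n ≥ n₀, R0 ≤ Rn C n := by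
  refine ⟨⌈Real.exp ((R0 - C)/2)⌉₊ + 1, fun n hn => ?_⟩
  have h1 : Real.exp ((R0 - C)/2) ≤ (n:ℝ) := by
    calc Real.exp ((R0 - C)/2) ≤ (⌈Real.exp ((R0 - C)/2)⌉₊ : ℝ) := Nat.le_ceil _
      _ ≤ (n:ℝ) := by exact_mod_cast le_trans (Nat.le_succ _) hn
  have h2 : (R0 - C)/2 ≤ Real.log n :=
    (Real.le_log_iff_exp_le (lt_of_lt_of_le (Real.exp_pos _) h1)).2 h1
  unfold Rn; linarith

lemma vol_rect (a b c d : ℝ) :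
    volume (Set.Icc a b ×ˢ Set.Icc c d) = ENNReal.ofReal (b - a) * ENNReal.ofReal (d - c) := by
  rw [MeasureTheory.Measure.volume_eq_prod, MeasureTheory.Measure.prod_prod,
    Real.volume_Icc, Real.volume_Icc]

lemma hyp_lower (α Rr d0 : ℝ) {K : Set (ℝ × ℝ)} (hK : MeasurableSet K)
    (hd : ∀ p ∈ K, d0 ≤ dens α Rr p) :
    ENNReal.ofReal d0 * volume K ≤ hypMeasure α Rr K := by
  rw [hypMeasure, withDensity_apply _ hK]
  calc ENNReal.ofReal d0 * volume K = ∫⁻ _ in K, ENNReal.ofReal d0 := by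
        rw [setLIntegral_const]
    _ ≤ ∫⁻ p in K, ENNReal.ofReal (dens α Rr p) := by
        apply setLIntegral_mono' hK
        intro p hp
        exact ENNReal.ofReal_le_ofReal (hd p hp)

lemma hyp_fin (α Rr : ℝ) (hα : 0 < α) (hR : 0 < Rr) (S : Set (ℝ × ℝ)) :
    hypMeasure α Rr S ≠ ⊤ := by
  have h1 : hypMeasure α Rr S ≤ hypMeasure α Rr Set.univ := measure_mono (Set.subset_univ S)
  set D : ℝ := α * Real.sinh (α * Rr) / (2 * Real.pi * (Real.cosh (α * Rr) - 1)) with hD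
  set box : Set (ℝ × ℝ) := Set.Icc 0 Rr ×ˢ Set.Icc 0 (2 * Real.pi) with hbox
  have hboxm : MeasurableSet box := (measurableSet_Icc).prod measurableSet_Icc
  have h2 : hypMeasure α Rr Set.univ ≤ ENNReal.ofReal D * volume box := by
    rw [hypMeasure, withDensity_apply _ MeasurableSet.univ, Measure.restrict_univ]
    calc ∫⁻ p, ENNReal.ofReal (dens α Rr p)
        ≤ ∫⁻ p, box.indicator (fun _ => ENNReal.ofReal D) p := by
          apply lintegral_mono
          intro p
          simp only [dens]
          split_ifs with h
          · have hin : p ∈ box := ⟨⟨h.1, h.2.1.le⟩, ⟨h.2.2.1, h.2.2.2.le⟩⟩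
            rw [Set.indicator_of_mem hin]
            apply ENNReal.ofReal_le_ofReal
            have hden : 0 < 2 * Real.pi * (Real.cosh (α * Rr) - 1) := by
              have h1 : 1 < Real.cosh (α * Rr) := by
                rw [← Real.cosh_zero, Real.cosh_lt_cosh]
                simp [abs_of_pos (mul_pos hα hR), (mul_pos hα hR)]
              have := Real.pi_pos
              nlinarith
            have hs : Real.sinh (α * p.1) ≤ Real.sinh (α * Rr) := by
              rw [Real.sinh_le_sinh]
              nlinarith [h.1, h.2.1]
            rw [div_le_div_iff_of_pos_right hden]
            nlinarith
          · simp
      _ = ENNReal.ofReal D * volume box := by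
          rw [lintegral_indicator hboxm, setLIntegral_const]
  have h3 : volume box < ⊤ := ((isCompact_Icc).prod isCompact_Icc).measure_lt_top
  intro hcon
  rw [hcon] at h1
  have h4 := lt_of_le_of_lt (h1.trans h2) (ENNReal.mul_lt_top ENNReal.ofReal_lt_top h3)
  exact (lt_irrefl _ (h4.trans_le le_top)).elim

lemma mes_lower {α Rr v : ℝ} {K S : Set (ℝ × ℝ)} (hα : 0 < α) (hRr : 0 < Rr) (hv : 0 ≤ v)
    (hKS : K ⊆ S) (h : ENNReal.ofReal v ≤ hypMeasure α Rr K) : v ≤ mes α Rr S := by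
  have h1 : hypMeasure α Rr K ≤ hypMeasure α Rr S := measure_mono hKS
  have h2 := ENNReal.toReal_mono (hyp_fin α Rr hα hRr S) (h.trans h1)
  rwa [ENNReal.toReal_ofReal hv] at h2

end Aux


lemma le_of_sq_le_sq' {x y : ℝ} (h : x^2 ≤ y^2) (hx : 0 ≤ x) (hy : 0 ≤ y) : x ≤ y := by
  nlinarith [sq_nonneg (x - y), sq_nonneg (x + y)]

set_option maxHeartbeats 1000000 in
/-- Lemma 4.2 of the paper: the part of the annulus of `B` inside the band
that avoids `B_A(R)` has measure at least `c e^{-R/2}`. -/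
theorem ball_intersection_avoid (α C c₁ c₂ c₃ : ℝ) (hα : 1/2 < α) (hα' : α < 1)
    (h3 : 0 < c₃) (h31 : c₃ < c₁) (h12 : c₁ < c₂)
    (hcs : Real.exp (c₃ / 2) < 2 * Real.exp (c₁ - c₂)) :
    ∃ c > (0:ℝ), ∃ n₀ : ℕ, ∀ n ≥ n₀, ∀ A B : ℝ × ℝ,
      validPoint (Rn C n) A → validPoint (Rn C n) B →
      Rn C n - c₂ ≤ A.1 → A.1 ≤ Rn C n - c₁ →
      Rn C n - c₂ ≤ B.1 → B.1 ≤ Rn C n - c₁ →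
      Real.cosh (Rn C n - c₃) ≤ coshDist A B → coshDist A B ≤ Real.cosh (Rn C n) →
      c * Real.exp (-(Rn C n) / 2) ≤
        mes α (Rn C n) (((hBall B (Rn C n) \ hBall B (Rn C n - c₃)) ∩
          (hBall origin (Rn C n - c₁) \ hBall origin (Rn C n - c₂))) \ hBall A (Rn C n)) := by
  have hπ := Real.pi_gt_three
  have hπ0 := Real.pi_pos
  have hπ315 := Real.pi_lt_d2
  have h10 : 0 < c₁ := by linarith
  have h20 : 0 < c₂ := by linarith
  -- basic constants
  set t : ℝ := Real.exp (-(c₃/2)) with ht_def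
  have ht0 : 0 < t := Real.exp_pos _
  have ht1 : t < 1 := by rw [ht_def, Real.exp_lt_one_iff]; linarith
  set q : ℝ := Real.exp ((c₁-c₂)/2) with hq_def
  have hq0 : 0 < q := Real.exp_pos _
  have hq1 : q < 1 := by rw [hq_def, Real.exp_lt_one_iff]; linarith
  set κ' : ℝ := q - 1 + t with hκ'_def
  have hκ'0 : 0 < κ' := by
    have e1 : t * Real.exp (c₃/2) = 1 := by
      rw [ht_def, ← Real.exp_add]; norm_num
    have e2 : q*q = Real.exp (c₁ - c₂) := by
      rw [hq_def, ← Real.exp_add]; congr 1; ring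
    have e3 : 1 < 2*(q*q)*t := by
      have h := mul_lt_mul_of_pos_left hcs ht0
      rw [show t * (Real.exp (c₃/2)) = 1 from e1] at h
      nlinarith only [h, e2, ht0]
    by_contra hcon
    push_neg at hcon
    rw [hκ'_def] at hcon
    have h5 : q*q ≤ (1-t)*(1-t) := by nlinarith only [hcon, hq0, ht1]
    have h6 : 2*((1-t)*(1-t))*t ≤ 8/27 := by
      nlinarith only [mul_nonneg (sq_nonneg (t - 1/3)) (show (0:ℝ) ≤ 4/3 - t by linarith only [ht1])]
    nlinarith only [e3, h5, h6, ht0]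
  set ε : ℝ := min (min (1/16) ((1-t)/16)) (min ((c₂-c₁)/2) (Real.exp (c₁-c₂) * κ' / 18))
    with hε_def
  have hε0 : 0 < ε :=
    lt_min (lt_min (by norm_num) (by linarith)) (lt_min (by linarith) (by positivity))
  have hε16 : ε ≤ 1/16 := (min_le_left _ _).trans (min_le_left _ _)
  have hεt : ε ≤ (1-t)/16 := (min_le_left _ _).trans (min_le_right _ _)
  have hεc : ε ≤ (c₂-c₁)/2 := (min_le_right _ _).trans (min_le_left _ _)
  have hεκ : ε ≤ Real.exp (c₁-c₂) * κ' / 18 := (min_le_right _ _).trans (min_le_right _ _)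
  clear_value ε
  clear hε_def
  set κ : ℝ := Real.exp c₁ * min (κ'/2) ((1-t)/2) with hκ_def
  have hκ0 : 0 < κ := mul_pos (Real.exp_pos _) (lt_min (by linarith) (by linarith))
  have hκu1 : κ ≤ Real.exp c₁ * (κ'/2) :=
    mul_le_mul_of_nonneg_left (min_le_left _ _) (Real.exp_pos _).le
  have hκu2 : κ ≤ Real.exp c₁ * ((1-t)/2) :=
    mul_le_mul_of_nonneg_left (min_le_right _ _) (Real.exp_pos _).le
  clear_value κ t q κ'
  clear hκ_def
  set d₁ : ℝ := Real.exp (-(c₁+1)) / (16*Real.pi) with hd₁_def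
  have hd₁0 : 0 < d₁ := by positivity
  obtain ⟨n₀, hn₀⟩ := rn_large C (max (c₂+2) (max (2*c₂ - Real.log ε/2)
    (max (c₃ + Real.log ((Real.exp c₂ + 2)/ε)) (max (Real.log ((Real.exp c₂+2)/ε))
      (max (Real.log (9*Real.exp (2*c₂)/ε)) (2*Real.log (6*Real.exp c₂)))))))
  refine ⟨d₁ * ε * κ / 2, by positivity, n₀,
    fun n hn A B hvA hvB haL haU hbL hbU hdL hdU => ?_⟩
  have hR0 := hn₀ n hn
  set R := Rn C n with hR_def
  clear_value R
  -- largeness consequences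
  have hC1 : c₂ + 2 ≤ R := le_trans (le_max_left _ _) hR0
  have hRpos : 0 < R := by linarith
  have hC2 : Real.exp (-(2*(R - 2*c₂))) ≤ ε := by
    have h := le_trans (le_max_of_le_right (le_max_left _ _)) hR0
    have h2 : -(2*(R-2*c₂)) ≤ Real.log ε := by linarith
    calc Real.exp (-(2*(R-2*c₂))) ≤ Real.exp (Real.log ε) := Real.exp_le_exp.2 h2
      _ = ε := Real.exp_log hε0
  have hC3 : Real.exp c₂ + 2 ≤ ε * Real.exp (R - c₃) := by
    have h := le_trans (le_max_of_le_right (le_max_of_le_right (le_max_left _ _))) hR0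
    have hX : (0:ℝ) < (Real.exp c₂ + 2)/ε := by positivity
    have h2 : (Real.exp c₂ + 2)/ε ≤ Real.exp (R - c₃) := by
      calc (Real.exp c₂ + 2)/ε = Real.exp (Real.log ((Real.exp c₂ + 2)/ε)) :=
            (Real.exp_log hX).symm
        _ ≤ Real.exp (R - c₃) := Real.exp_le_exp.2 (by linarith)
    rw [div_le_iff₀ hε0] at h2
    linarith only [h2, mul_comm ε (Real.exp (R - c₃)),
      (mul_comm (Real.exp (R-c₃)) ε).le]
  have hC3b : Real.exp c₂ + 2 ≤ ε * Real.exp R := by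
    have h := le_trans (le_max_of_le_right (le_max_of_le_right
      (le_max_of_le_right (le_max_left _ _)))) hR0
    have hX : (0:ℝ) < (Real.exp c₂ + 2)/ε := by positivity
    have h2 : (Real.exp c₂ + 2)/ε ≤ Real.exp R := by
      calc (Real.exp c₂ + 2)/ε = Real.exp (Real.log ((Real.exp c₂ + 2)/ε)) :=
            (Real.exp_log hX).symm
        _ ≤ Real.exp R := Real.exp_le_exp.2 (by linarith)
    rw [div_le_iff₀ hε0] at h2
    linarith only [h2, (mul_comm (Real.exp R) ε).le, (mul_comm ε (Real.exp R)).le]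
  have hC4 : 36 * Real.exp (2*c₂) * Real.exp (-R) ≤ 4*ε := by
    have h := le_trans (le_max_of_le_right (le_max_of_le_right
      (le_max_of_le_right (le_max_of_le_right (le_max_left _ _))))) hR0
    have hX : (0:ℝ) < 9*Real.exp (2*c₂)/ε := by positivity
    have h2 : 9*Real.exp (2*c₂)/ε ≤ Real.exp R := by
      calc 9*Real.exp (2*c₂)/ε = Real.exp (Real.log (9*Real.exp (2*c₂)/ε)) :=
            (Real.exp_log hX).symm
        _ ≤ Real.exp R := Real.exp_le_exp.2 (by linarith)
    rw [div_le_iff₀ hε0] at h2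
    have h4 := mul_le_mul_of_nonneg_right h2 (Real.exp_pos (-R)).le
    have h5 : Real.exp R * Real.exp (-R) = 1 := by
      rw [← Real.exp_add]; simp
    nlinarith only [h4, h5, hε0, Real.exp_pos (-R), Real.exp_pos R]
  have hC5 : 6 * Real.exp c₂ * Real.exp (-R/2) ≤ 1 := by
    have h := le_trans (le_max_of_le_right (le_max_of_le_right
      (le_max_of_le_right (le_max_of_le_right (le_max_right _ _))))) hR0
    have hX : (0:ℝ) < 6*Real.exp c₂ := by positivity
    have h2 : 6*Real.exp c₂ ≤ Real.exp (R/2) := by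
      calc 6*Real.exp c₂ = Real.exp (Real.log (6*Real.exp c₂)) := (Real.exp_log hX).symm
        _ ≤ Real.exp (R/2) := Real.exp_le_exp.2 (by linarith)
    have h4 := mul_le_mul_of_nonneg_right h2 (Real.exp_pos (-R/2)).le
    have h5 : Real.exp (R/2) * Real.exp (-R/2) = 1 := by
      rw [← Real.exp_add, show R/2 + -R/2 = 0 by ring, Real.exp_zero]
    nlinarith only [h4, h5]
  clear hR0 hn₀ hn
  -- setup
  set δ : ℝ := Real.exp (-R/2) with hδ_def
  have hδ0 : 0 < δ := Real.exp_pos _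
  have hδδ : δ * δ = Real.exp (-R) := by rw [hδ_def, ← Real.exp_add]; congr 1; ring
  clear_value δ
  set a := A.1 with ha_def
  set b := B.1 with hb_def
  have ha0 : 2 ≤ a := by linarith
  have hb0 : 2 ≤ b := by linarith
  have hea : Real.exp (-(2*a)) ≤ ε :=
    le_trans (Real.exp_le_exp.2 (by linarith)) hC2
  have heb : Real.exp (-(2*b)) ≤ ε :=
    le_trans (Real.exp_le_exp.2 (by linarith)) hC2
  have hsa := sinh_lb hε0.le hea
  have hsb := sinh_lb hε0.le heb
  have hsaub := sinh_ub a
  have hsbub := sinh_ub b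
  clear_value a b
  have hsa0 : 0 ≤ Real.sinh a := by
    rw [Real.sinh_nonneg_iff]; linarith
  have hsb0 : 0 ≤ Real.sinh b := by
    rw [Real.sinh_nonneg_iff]; linarith
  -- the angle φ
  set g : ℝ := B.2 - A.2 with hg_def
  set φ : ℝ := Real.arccos (Real.cos g) with hφ_def
  have hφ0 : 0 ≤ φ := Real.arccos_nonneg _
  have hφπ : φ ≤ Real.pi := Real.arccos_le_pi _
  have hcosφ : Real.cos φ = Real.cos g :=
    Real.cos_arccos (Real.neg_one_le_cos g) (Real.cos_le_one g)
  set σ : ℝ := if 0 ≤ Real.sin g then (1:ℝ) else -1 with hσ_def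
  have hσ : σ = 1 ∨ σ = -1 := by
    rw [hσ_def]; split_ifs <;> simp
  have hsinφ : σ * Real.sin g = Real.sin φ := by
    rw [hφ_def, Real.sin_arccos]
    have h1 : 1 - Real.cos g ^ 2 = Real.sin g ^ 2 := by
      nlinarith only [Real.sin_sq_add_cos_sq g]
    rw [h1, Real.sqrt_sq_eq_abs, hσ_def]
    split_ifs with h
    · rw [abs_of_nonneg h]; ring
    · rw [abs_of_neg (not_le.1 h)]; ring
  clear_value σ φ
  clear hφ_def hσ_def
  -- expansion of coshDist A B
  have hABeq : coshDist A B =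
      Real.cosh (a-b) + Real.sinh a * Real.sinh b * (2*Real.sin (φ/2)^2) := by
    unfold coshDist
    rw [← ha_def, ← hb_def]
    exact cdist_formula a b (A.2 - B.2) φ (by
      rw [show A.2 - B.2 = -g by rw [hg_def]; ring, Real.cos_neg]
      exact hcosφ.symm)
  have habc : Real.cosh (a-b) ≤ (Real.exp c₂ + 1)/2 := by
    have h1 : Real.cosh (a-b) ≤ Real.cosh c₂ := by
      rw [Real.cosh_le_cosh, abs_of_pos h20, abs_le]
      constructor <;> linarith
    linarith [cosh_ub0 h20.le]
  have habc1 : 1 ≤ Real.cosh (a-b) := Real.one_le_cosh _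
  have hsinφ0 : 0 ≤ Real.sin (φ/2) :=
    Real.sin_nonneg_of_nonneg_of_le_pi (by linarith only [hφ0])
      (by linarith only [hφπ, hπ0.le])
  -- φ lower bound
  have hφlb : 2*(1-ε)*(δ*Real.exp ((2*R-a-b-c₃)/2)) ≤ φ := by
    have hm2 : (δ*Real.exp ((2*R-a-b-c₃)/2)) * (δ*Real.exp ((2*R-a-b-c₃)/2))
        = Real.exp (R-c₃) * (Real.exp (-a) * Real.exp (-b)) := by
      rw [hδ_def, ← Real.exp_add, ← Real.exp_add, ← Real.exp_add, ← Real.exp_add]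
      congr 1; ring
    have h1 : Real.cosh (R-c₃) ≤
        Real.cosh (a-b) + Real.sinh a * Real.sinh b * (2*Real.sin (φ/2)^2) := by
      rw [← hABeq]; exact hdL
    have h2 : Real.exp (R-c₃)/2 ≤ Real.cosh (R-c₃) := cosh_lb _
    have hSab : Real.sinh a * Real.sinh b * (2*Real.sin (φ/2)^2)
        ≤ Real.exp a * Real.exp b * Real.sin (φ/2)^2 / 2 := by
      have hh := mul_le_mul hsaub hsbub hsb0 (by positivity : (0:ℝ) ≤ Real.exp a / 2)
      nlinarith only [mul_le_mul_of_nonneg_right hh (sq_nonneg (Real.sin (φ/2)))]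
    have h3 : (1-ε) * Real.exp (R-c₃) ≤ Real.exp a * Real.exp b * Real.sin (φ/2)^2 := by
      linarith only [h1, h2, hSab, habc, hC3]
    have hEa : Real.exp a * Real.exp (-a) = 1 := by rw [← Real.exp_add]; simp
    have hEb2 : Real.exp b * Real.exp (-b) = 1 := by rw [← Real.exp_add]; simp
    have h4 : (1-ε) * (Real.exp (R-c₃) * (Real.exp (-a) * Real.exp (-b)))
        ≤ Real.sin (φ/2)^2 := by
      have h5 := mul_le_mul_of_nonneg_right h3
        (by positivity : (0:ℝ) ≤ Real.exp (-a) * Real.exp (-b))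
      calc (1-ε) * (Real.exp (R-c₃) * (Real.exp (-a)*Real.exp (-b)))
          = (1-ε) * Real.exp (R-c₃) * (Real.exp (-a)*Real.exp (-b)) := by ring
        _ ≤ Real.exp a * Real.exp b * Real.sin (φ/2)^2 * (Real.exp (-a)*Real.exp (-b)) := h5
        _ = (Real.exp a * Real.exp (-a)) * (Real.exp b * Real.exp (-b)) * Real.sin (φ/2)^2 := by
            ring
        _ = Real.sin (φ/2)^2 := by rw [hEa, hEb2]; ring
    have h7 : ((1-ε) * (δ*Real.exp ((2*R-a-b-c₃)/2)))^2 ≤ Real.sin (φ/2)^2 := by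
      have hY : (0:ℝ) ≤ Real.exp (R-c₃) * (Real.exp (-a) * Real.exp (-b)) := by positivity
      have hsq : (1-ε)^2 ≤ (1-ε) := by nlinarith only [hε0, hε16]
      have h8 := mul_le_mul_of_nonneg_right hsq hY
      calc ((1-ε) * (δ*Real.exp ((2*R-a-b-c₃)/2)))^2
          = (1-ε)^2 * ((δ*Real.exp ((2*R-a-b-c₃)/2)) * (δ*Real.exp ((2*R-a-b-c₃)/2))) := by
            ring
        _ = (1-ε)^2 * (Real.exp (R-c₃) * (Real.exp (-a) * Real.exp (-b))) := by rw [hm2]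
        _ ≤ (1-ε) * (Real.exp (R-c₃) * (Real.exp (-a) * Real.exp (-b))) := h8
        _ ≤ Real.sin (φ/2)^2 := h4
    have h6 : (1-ε) * (δ*Real.exp ((2*R-a-b-c₃)/2)) ≤ Real.sin (φ/2) :=
      le_of_sq_le_sq' h7 (mul_nonneg (by linarith only [hε16]) (by positivity)) hsinφ0
    have h8 : Real.sin (φ/2) ≤ φ/2 := Real.sin_le (by linarith only [hφ0])
    linarith only [h6, h8]
  -- φ upper bound
  have hφub : φ ≤ 4*δ*Real.exp c₂ := by
    have h1 : Real.cosh (a-b) + Real.sinh a * Real.sinh b * (2*Real.sin (φ/2)^2)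
        ≤ Real.cosh R := by rw [← hABeq]; exact hdU
    have h2 : Real.cosh R ≤ (Real.exp R + 1)/2 := cosh_ub0 hRpos.le
    have hlow : (1-ε)*Real.exp a/2 * ((1-ε)*Real.exp b/2) * (2*Real.sin (φ/2)^2)
        ≤ Real.sinh a * Real.sinh b * (2*Real.sin (φ/2)^2) :=
      mul_le_mul_of_nonneg_right (mul_le_mul hsa hsb
        (mul_nonneg (mul_nonneg (by linarith only [hε16]) (Real.exp_pos b).le)
          (by norm_num)) hsa0) (by positivity)
    have h3 : (1-ε)^2 * (Real.exp a * Real.exp b) * Real.sin (φ/2)^2 ≤ Real.exp R := by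
      nlinarith only [h1, h2, hlow, habc1]
    have hEab2 : Real.exp (R-a-b) * (Real.exp a * Real.exp b) = Real.exp R := by
      rw [← Real.exp_add, ← Real.exp_add]; congr 1; ring
    have hEa : Real.exp a * Real.exp (-a) = 1 := by rw [← Real.exp_add]; simp
    have hEb2 : Real.exp b * Real.exp (-b) = 1 := by rw [← Real.exp_add]; simp
    have h5 : (1-ε)^2 * Real.sin (φ/2)^2 ≤ Real.exp (R-a-b) := by
      have h6 := mul_le_mul_of_nonneg_right h3
        (by positivity : (0:ℝ) ≤ Real.exp (-a) * Real.exp (-b))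
      have h7 : Real.exp R * (Real.exp (-a) * Real.exp (-b)) = Real.exp (R-a-b) := by
        rw [← Real.exp_add, ← Real.exp_add]; congr 1; ring
      calc (1-ε)^2 * Real.sin (φ/2)^2
          = (1-ε)^2 * (Real.exp a * Real.exp (-a)) * (Real.exp b * Real.exp (-b))
            * Real.sin (φ/2)^2 := by rw [hEa, hEb2]; ring
        _ = (1-ε)^2 * (Real.exp a * Real.exp b) * Real.sin (φ/2)^2
            * (Real.exp (-a) * Real.exp (-b)) := by ring
        _ ≤ Real.exp R * (Real.exp (-a) * Real.exp (-b)) := h6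
        _ = Real.exp (R-a-b) := h7
    have h6 : Real.exp (R-a-b) ≤ (δ*Real.exp c₂)^2 := by
      have h7 : (δ*Real.exp c₂)^2 = Real.exp (2*c₂ - R) := by
        simp only [hδ_def, pow_two, ← Real.exp_add]; congr 1; ring
      rw [h7]
      exact Real.exp_le_exp.2 (by linarith only [haL, hbL])
    have h8 : ((1-ε)*Real.sin (φ/2))^2 ≤ (δ*Real.exp c₂)^2 := by
      calc ((1-ε)*Real.sin (φ/2))^2 = (1-ε)^2 * Real.sin (φ/2)^2 := by ring
        _ ≤ Real.exp (R-a-b) := h5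
        _ ≤ (δ*Real.exp c₂)^2 := h6
    have h9 : (1-ε)*Real.sin (φ/2) ≤ δ*Real.exp c₂ :=
      le_of_sq_le_sq' h8 (mul_nonneg (by linarith only [hε16]) hsinφ0) (by positivity)
    have h10 : 2/Real.pi * (φ/2) ≤ Real.sin (φ/2) :=
      Real.mul_le_sin (by linarith only [hφ0]) (by linarith only [hφπ])
    have h11 : φ ≤ Real.pi * Real.sin (φ/2) := by
      have h12 := mul_le_mul_of_nonneg_left h10 hπ0.le
      have h13 : Real.pi * (2/Real.pi * (φ/2)) = φ := by field_simp
      linarith only [h12, h13.ge, h13.le]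
    have h14 : 0 ≤ (4*(1-ε) - Real.pi) * Real.sin (φ/2) :=
      mul_nonneg (by linarith only [hε16, hπ315]) hsinφ0
    linarith only [h11, h9, h14]
  -- the ψ interval
  set ψ₂ : ℝ := 2*δ*((1-ε) * Real.exp ((R - b + c₁)/2)) with hψ₂_def
  set Ψa : ℝ := (1+ε)^3 * Real.exp ((R - a + c₁ + ε)/2)
      - (1-ε) * Real.exp ((2*R - a - b - c₃)/2) with hΨa_def
  set ψ₁ : ℝ := 2*δ*max ((1+ε)^3 * Real.exp ((R - b + c₁ + ε - c₃)/2)) Ψa with hψ₁_def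
  have hψ₁0 : 0 < ψ₁ := by
    apply mul_pos (by positivity)
    exact lt_max_of_lt_left (by positivity)
  have hgap : ψ₁ + 2*δ*κ ≤ ψ₂ := by
    have hXB1 : Real.exp (c₁/2) ≤ Real.exp ((R-b)/2) :=
      Real.exp_le_exp.2 (by linarith only [hbU])
    have hXB2 : Real.exp ((R-b)/2) ≤ Real.exp (c₂/2) :=
      Real.exp_le_exp.2 (by linarith only [hbL])
    have hXA1 : Real.exp (c₁/2) ≤ Real.exp ((R-a)/2) :=
      Real.exp_le_exp.2 (by linarith only [haU])
    have hXA2 : Real.exp ((R-a)/2) ≤ Real.exp (c₂/2) :=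
      Real.exp_le_exp.2 (by linarith only [haL])
    have he12 : Real.exp (c₁/2) ≤ Real.exp (c₂/2) :=
      Real.exp_le_exp.2 (by linarith only [h12])
    have e₁pos : (0:ℝ) < Real.exp (c₁/2) := Real.exp_pos _
    have e₂pos : (0:ℝ) < Real.exp (c₂/2) := Real.exp_pos _
    have i1 : Real.exp ((R-b+c₁+ε-c₃)/2)
        = Real.exp ((R-b)/2) * Real.exp (c₁/2) * (Real.exp (ε/2)*t) := by
      rw [ht_def, ← Real.exp_add, ← Real.exp_add, ← Real.exp_add]; congr 1; ring
    have i2 : Real.exp ((R-b+c₁)/2) = Real.exp ((R-b)/2) * Real.exp (c₁/2) := by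
      rw [← Real.exp_add]; congr 1; ring
    have i3 : Real.exp ((R-a+c₁+ε)/2)
        = Real.exp ((R-a)/2) * (Real.exp (c₁/2) * Real.exp (ε/2)) := by
      rw [← Real.exp_add, ← Real.exp_add]; congr 1; ring
    have i4 : Real.exp ((2*R-a-b-c₃)/2)
        = Real.exp ((R-a)/2) * Real.exp ((R-b)/2) * t := by
      rw [ht_def, ← Real.exp_add, ← Real.exp_add]; congr 1; ring
    have i5 : Real.exp c₁ = Real.exp (c₁/2) * Real.exp (c₁/2) := by
      rw [← Real.exp_add]; congr 1; ring
    have i6 : q * Real.exp (c₂/2) = Real.exp (c₁/2) := by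
      rw [hq_def, ← Real.exp_add]; congr 1; ring
    have i8 : Real.exp (c₁-c₂) = q*q := by
      rw [hq_def, ← Real.exp_add]; congr 1; ring
    have F1 := F1_lem hε0.le hε16
    -- G1
    have hG1 : κ ≤ (1-ε)*Real.exp ((R-b+c₁)/2)
        - (1+ε)^3*Real.exp ((R-b+c₁+ε-c₃)/2) := by
      rw [i1, i2]
      have hm1 : (1+ε)^3*(Real.exp (ε/2)*t) ≤ (1+7*ε)*t := by
        have hh := mul_le_mul_of_nonneg_right F1 ht0.le
        nlinarith only [hh]
      have hm2 : (1-t)/2 ≤ (1-ε) - (1+7*ε)*t := by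
        nlinarith only [hεt, mul_nonneg hε0.le (show (0:ℝ) ≤ 1-t by linarith only [ht1])]
      have hXBe : Real.exp (c₁/2)*Real.exp (c₁/2)
          ≤ Real.exp ((R-b)/2)*Real.exp (c₁/2) :=
        mul_le_mul_of_nonneg_right hXB1 e₁pos.le
      have key : Real.exp ((R-b)/2)*Real.exp (c₁/2)*((1-t)/2)
          ≤ Real.exp ((R-b)/2)*Real.exp (c₁/2)
            *((1-ε) - (1+ε)^3*(Real.exp (ε/2)*t)) := by
        apply mul_le_mul_of_nonneg_left _ (by positivity)
        linarith only [hm1, hm2]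
      have htri : Real.exp (c₁/2)*Real.exp (c₁/2)*((1-t)/2)
          ≤ Real.exp ((R-b)/2)*Real.exp (c₁/2)*((1-t)/2) :=
        mul_le_mul_of_nonneg_right hXBe (by linarith only [ht1])
      have hκ1 : κ ≤ Real.exp (c₁/2)*Real.exp (c₁/2)*((1-t)/2) := by
        rw [← i5]; exact hκu2
      nlinarith only [hκ1, htri, key]
    -- G2
    have hG2 : κ ≤ (1-ε)*Real.exp ((R-b+c₁)/2) - Ψa := by
      rw [hΨa_def, i2, i3, i4]
      have p1 : (0:ℝ) ≤ Real.exp (c₁/2)*(Real.exp ((R-b)/2) - Real.exp (c₁/2)) :=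
        mul_nonneg e₁pos.le (by linarith only [hXB1])
      have p2 : (0:ℝ) ≤ t*Real.exp ((R-a)/2)*(Real.exp ((R-b)/2) - Real.exp (c₁/2)) :=
        mul_nonneg (mul_nonneg ht0.le (Real.exp_pos _).le) (by linarith only [hXB1])
      have p3 : (0:ℝ) ≤ Real.exp (c₁/2)*(1-t)*(Real.exp (c₂/2) - Real.exp ((R-a)/2)) :=
        mul_nonneg (mul_nonneg e₁pos.le (by linarith only [ht1])) (by linarith only [hXA2])
      have i7 : Real.exp (c₁/2)*Real.exp (c₂/2)*q = Real.exp (c₁/2)*Real.exp (c₁/2) := by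
        rw [mul_assoc, mul_comm (Real.exp (c₂/2)) q, i6]
      have hbil : Real.exp (c₁/2)*Real.exp (c₂/2)*κ'
          ≤ Real.exp ((R-b)/2)*Real.exp (c₁/2)
            + Real.exp ((R-a)/2)*Real.exp ((R-b)/2)*t
            - Real.exp ((R-a)/2)*Real.exp (c₁/2) := by
        rw [hκ'_def]
        nlinarith only [p1, p2, p3, i7]
      have herr1 : Real.exp ((R-b)/2)*Real.exp (c₁/2) ≤ Real.exp (c₂/2)*Real.exp (c₂/2) :=
        mul_le_mul hXB2 he12 e₁pos.le e₂pos.le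
      have herr2 : Real.exp ((R-a)/2)*Real.exp ((R-b)/2)*t
          ≤ Real.exp (c₂/2)*Real.exp (c₂/2) := by
        have hh : Real.exp ((R-a)/2)*Real.exp ((R-b)/2)
            ≤ Real.exp (c₂/2)*Real.exp (c₂/2) :=
          mul_le_mul hXA2 hXB2 (Real.exp_pos _).le e₂pos.le
        nlinarith only [hh, ht0, ht1, mul_pos (Real.exp_pos ((R-a)/2)) (Real.exp_pos ((R-b)/2))]
      have herr3 : Real.exp ((R-a)/2)*Real.exp (c₁/2) ≤ Real.exp (c₂/2)*Real.exp (c₂/2) :=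
        mul_le_mul hXA2 he12 e₁pos.le e₂pos.le
      have hFA : (1+ε)^3*(Real.exp ((R-a)/2)*(Real.exp (c₁/2)*Real.exp (ε/2)))
          ≤ (1+7*ε)*(Real.exp ((R-a)/2)*Real.exp (c₁/2)) := by
        have hh := mul_le_mul_of_nonneg_right F1
          (mul_nonneg (Real.exp_pos ((R-a)/2)).le e₁pos.le)
        nlinarith only [hh]
      have hεκ2 : 18*ε*(Real.exp (c₂/2)*Real.exp (c₂/2))
          ≤ κ'*(Real.exp (c₁/2)*Real.exp (c₁/2)) := by
        have hh : 18*ε ≤ q*q*κ' := by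
          have h0 := hεκ
          rw [i8] at h0
          linarith only [mul_le_mul_of_nonneg_left h0 (by norm_num : (0:ℝ) ≤ 18)]
        have hh2 := mul_le_mul_of_nonneg_right hh
          (mul_nonneg e₂pos.le e₂pos.le)
        have hh3 : q*q*κ'*(Real.exp (c₂/2)*Real.exp (c₂/2))
            = κ'*((q*Real.exp (c₂/2))*(q*Real.exp (c₂/2))) := by ring
        rw [hh3, i6] at hh2
        linarith only [hh2]
      have hee : κ'*(Real.exp (c₁/2)*Real.exp (c₁/2))
          ≤ κ'*(Real.exp (c₁/2)*Real.exp (c₂/2)) := by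
        apply mul_le_mul_of_nonneg_left _ hκ'0.le
        exact mul_le_mul_of_nonneg_left he12 e₁pos.le
      have hmul1 : ε*(Real.exp ((R-b)/2)*Real.exp (c₁/2))
          ≤ ε*(Real.exp (c₂/2)*Real.exp (c₂/2)) :=
        mul_le_mul_of_nonneg_left herr1 hε0.le
      have hmul2 : ε*(Real.exp ((R-a)/2)*Real.exp ((R-b)/2)*t)
          ≤ ε*(Real.exp (c₂/2)*Real.exp (c₂/2)) :=
        mul_le_mul_of_nonneg_left herr2 hε0.le
      have hmul3 : ε*(Real.exp ((R-a)/2)*Real.exp (c₁/2))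
          ≤ ε*(Real.exp (c₂/2)*Real.exp (c₂/2)) :=
        mul_le_mul_of_nonneg_left herr3 hε0.le
      have hκ2 : κ ≤ κ'*(Real.exp (c₁/2)*Real.exp (c₁/2))/2 := by
        rw [← i5]; linarith only [hκu1]
      linarith only [hbil, hFA, hκ2, hεκ2, hee, hmul1, hmul2, hmul3]
    have hmax : max ((1+ε)^3 * Real.exp ((R - b + c₁ + ε - c₃)/2)) Ψa
        ≤ (1-ε)*Real.exp ((R-b+c₁)/2) - κ :=
      max_le (by linarith only [hG1]) (by linarith only [hG2])
    have h2 := mul_le_mul_of_nonneg_left hmax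
      (by positivity : (0:ℝ) ≤ 2*δ)
    rw [hψ₁_def, hψ₂_def]
    nlinarith only [h2]
  clear_value ψ₁ Ψa ψ₂
  set w : ℝ := ψ₂ - ψ₁ with hw_def
  have hwκ : 2*δ*κ ≤ w := by rw [hw_def]; linarith only [hgap]
  have hw0 : 0 < w := lt_of_lt_of_le (by positivity) hwκ
  have hψ₂ub : ψ₂ ≤ 2*δ*Real.exp c₂ := by
    have h1 : Real.exp ((R - b + c₁)/2) ≤ Real.exp c₂ :=
      Real.exp_le_exp.2 (by linarith only [hbL, h12])
    have h2 : (1-ε) * Real.exp ((R - b + c₁)/2) ≤ Real.exp c₂ := by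
      nlinarith only [h1, hε0, Real.exp_pos ((R - b + c₁)/2)]
    rw [hψ₂_def]
    nlinarith only [h2, hδ0]
  have h2δe : 2*δ*Real.exp c₂ ≤ 1/3 := by
    nlinarith only [hC5, Real.exp_pos c₂, hδ0]

  have hw1 : w ≤ 1 := by
    rw [hw_def]; linarith only [hψ₂ub, h2δe, hψ₁0]
  -- the angular interval
  clear_value w
  set uu : ℝ := A.2 + σ*φ + (if σ = 1 then ψ₁ else -ψ₂) with huu_def
  obtain ⟨t₁, ht₁0, ht₁π, hshift⟩ := exists_shift uu w hw0 hw1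
  obtain ⟨ν₂, hν₂_def⟩ : ∃ x : ℝ, x = R - c₁ := ⟨_, rfl⟩
  obtain ⟨ν₁, hν₁_def⟩ : ∃ x : ℝ, x = R - (c₁ + ε) := ⟨_, rfl⟩
  set K : Set (ℝ × ℝ) := Set.Icc ν₁ ν₂ ×ˢ Set.Icc t₁ (t₁ + w/4) with hK_def
  have hν₁2 : 2 ≤ ν₁ := by rw [hν₁_def]; linarith only [hC1, hε16, h12, h20, hεc]
  have hν₁lb : R - c₂ < ν₁ := by rw [hν₁_def]; linarith only [hεc, h12]
  -- inclusion of K in the target set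
  clear_value uu
  have hsub : K ⊆ ((hBall B R \ hBall B (R - c₃)) ∩
      (hBall origin (R - c₁) \ hBall origin (R - c₂))) \ hBall A R := by
    rintro ⟨q1, q2⟩ ⟨hq1, hq2⟩
    simp only [Set.mem_Icc] at hq1 hq2
    obtain ⟨M, hM⟩ := hshift q2 (Set.mem_Icc.2 hq2)
    simp only [Set.mem_Icc] at hM
    set ψ : ℝ := σ * (q2 + M*(2*Real.pi) - A.2) - φ with hψ_def
    have hψmem : ψ₁ ≤ ψ ∧ ψ ≤ ψ₂ := by
      rcases hσ with h | h
      · rw [huu_def, h] at hM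
        norm_num at hM
        rw [hψ_def, h]
        constructor
        · linarith only [hM.1]
        · rw [hw_def] at hM; linarith only [hM.1, hM.2]
      · rw [huu_def, h] at hM
        norm_num at hM
        rw [hψ_def, h]
        constructor
        · rw [hw_def] at hM; linarith only [hM.1, hM.2]
        · linarith only [hM.1, hM.2]
    have hXeq : q2 + M*(2*Real.pi) - A.2 = σ*(φ+ψ) := by
      rcases hσ with h | h <;> rw [hψ_def, h] <;> ring
    have e2 : Real.cos (q2 - A.2) = Real.cos (φ+ψ) := by
      have h1 : Real.cos (q2 - A.2) = Real.cos (q2 - A.2 + M*(2*Real.pi)) :=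
        (Real.cos_add_int_mul_two_pi _ M).symm
      have h2 : q2 - A.2 + M*(2*Real.pi) = σ*(φ+ψ) := by
        rw [← hXeq]; ring
      rw [h1, h2]
      rcases hσ with h | h
      · rw [h, one_mul]
      · rw [h, neg_one_mul, Real.cos_neg]
    have e1 : Real.cos (q2 - B.2) = Real.cos ψ := by
      have h1 : Real.cos (q2 - B.2) = Real.cos (q2 - B.2 + M*(2*Real.pi)) :=
        (Real.cos_add_int_mul_two_pi _ M).symm
      have h2 : q2 - B.2 + M*(2*Real.pi) = σ*(φ+ψ) - g := by
        rw [← hXeq, hg_def]; ring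
      rw [h1, h2]
      exact cos_transfer g φ ψ σ hσ hcosφ.symm hsinφ
    -- basic facts about q1 and ψ
    have hq10 : 2 ≤ q1 := le_trans hν₁2 hq1.1
    have hq1ub : q1 ≤ R - c₁ := by rw [hν₂_def] at hq1; exact hq1.2
    have hq1lb : R - c₁ - ε ≤ q1 := by
      rw [hν₁_def] at hq1; linarith only [hq1.1]
    have heq1 : Real.exp (-(2*q1)) ≤ ε := by
      apply le_trans (Real.exp_le_exp.2 _) hC2
      linarith only [hq1lb, hεc, h12, h10]
    have hsq1 := sinh_lb hε0.le heq1
    have hsq1ub := sinh_ub q1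
    have hsq10 : 0 ≤ Real.sinh q1 := by rw [Real.sinh_nonneg_iff]; linarith only [hq10]
    have hψa : ψ₁ ≤ ψ := hψmem.1
    have hψb : ψ ≤ ψ₂ := hψmem.2
    have hψpos : 0 < ψ := lt_of_lt_of_le hψ₁0 hψa
    have hψub' : ψ ≤ 2*δ*Real.exp c₂ := le_trans hψb hψ₂ub
    have hψ1' : ψ ≤ 1 := by linarith only [hψub', h2δe]
    have hexp2c : Real.exp (2*c₂) = Real.exp c₂ * Real.exp c₂ := by
      rw [← Real.exp_add]; congr 1; ring
    have hψeps : ψ^2 ≤ 4*ε := by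
      have h1 : ψ^2 ≤ (2*δ*Real.exp c₂)^2 := pow_le_pow_left₀ hψpos.le hψub' 2
      have h2 : (2*δ*Real.exp c₂)^2 = 4*Real.exp (2*c₂)*Real.exp (-R) := by
        rw [← hδδ, hexp2c]; ring
      nlinarith only [h1, h2, hC4, mul_pos (Real.exp_pos (2*c₂)) (Real.exp_pos (-R))]
    have hsinψ := sin_half_lb hψpos hψ1' hψeps
    -- the composite angle
    have hx0 : 0 < φ + ψ := by linarith only [hφ0, hψpos]
    have hxub : φ + ψ ≤ 6*δ*Real.exp c₂ := by linarith only [hφub, hψub']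
    have hx1 : φ + ψ ≤ 1 := by linarith only [hxub, h2δe]
    have hxeps : (φ+ψ)^2 ≤ 4*ε := by
      have h1 : (φ+ψ)^2 ≤ (6*δ*Real.exp c₂)^2 := pow_le_pow_left₀ hx0.le hxub 2
      have h2 : (6*δ*Real.exp c₂)^2 = 36*Real.exp (2*c₂)*Real.exp (-R) := by
        rw [← hδδ, hexp2c]; ring
      linarith only [h1, h2.le, h2.ge, hC4]
    have hsinx := sin_half_lb hx0 hx1 hxeps
    -- expansions
    have eB : coshDist B (q1, q2) =
        Real.cosh (b - q1) + Real.sinh b * Real.sinh q1 * (2*Real.sin (ψ/2)^2) := by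
      unfold coshDist
      rw [← hb_def]
      exact cdist_formula b q1 (B.2 - q2) ψ (by
        rw [show B.2 - q2 = -(q2 - B.2) by ring, Real.cos_neg]; exact e1)
    have eA : coshDist A (q1, q2) =
        Real.cosh (a - q1) + Real.sinh a * Real.sinh q1 * (2*Real.sin ((φ+ψ)/2)^2) := by
      unfold coshDist
      rw [← ha_def]
      exact cdist_formula a q1 (A.2 - q2) (φ+ψ) (by
        rw [show A.2 - q2 = -(q2 - A.2) by ring, Real.cos_neg]; exact e2)
    have ebq : Real.cosh (b - q1) ≤ (Real.exp c₂ + 1)/2 := by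
      have h1 : Real.cosh (b-q1) ≤ Real.cosh c₂ := by
        rw [Real.cosh_le_cosh, abs_of_pos h20, abs_le]
        constructor
        · linarith only [hbL, hq1ub, h10]
        · linarith only [hbU, hq1lb, hεc, h10, h20]
      linarith [cosh_ub0 h20.le]
    have ebq1 : 1 ≤ Real.cosh (b - q1) := Real.one_le_cosh _
    have eaq1 : 1 ≤ Real.cosh (a - q1) := Real.one_le_cosh _
    -- membership
    simp only [Set.mem_diff, Set.mem_inter_iff, hBall, Set.mem_setOf_eq]
    refine ⟨⟨⟨?_, ?_⟩, ?_, ?_⟩, ?_⟩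
    · -- coshDist B q ≤ cosh R
      rw [eB]
      have hsinsq := sin_sq_ub hψpos.le (by linarith only [hψ1'] : ψ ≤ 2)
      have hUB := chainUB (Real.exp b) (Real.exp q1) (Real.sinh b) (Real.sinh q1)
        (Real.sin (ψ/2)) ψ (Real.exp_pos b) (Real.exp_pos q1) hψpos.le
        hsbub hsq1ub hsb0 hsq10 hsinsq (sq_nonneg _)
      have hsq : ψ^2 ≤ 4*(1-ε)^2*(δ*Real.exp ((R-b+c₁)/2))^2 := by
        have h1 : ψ^2 ≤ ψ₂^2 := pow_le_pow_left₀ hψpos.le hψb 2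
        rw [hψ₂_def] at h1
        nlinarith only [h1]
      have hid : (δ*Real.exp ((R-b+c₁)/2))^2 * (Real.exp b * Real.exp q1)
          = Real.exp (q1+c₁) := by
        simp only [hδ_def, pow_two, ← Real.exp_add]; congr 1; ring
      have hq1R : Real.exp (q1+c₁) ≤ Real.exp R :=
        Real.exp_le_exp.2 (by linarith only [hq1ub])
      have hcR : Real.exp R/2 ≤ Real.cosh R := cosh_lb R
      have hmul := mul_le_mul_of_nonneg_right hsq
        (by positivity : (0:ℝ) ≤ (Real.exp b * Real.exp q1)/8)
      have heq : 4*(1-ε)^2*(δ*Real.exp ((R-b+c₁)/2))^2 * ((Real.exp b * Real.exp q1)/8)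
          = (1-ε)^2 * ((δ*Real.exp ((R-b+c₁)/2))^2 * (Real.exp b * Real.exp q1)) / 2 := by
        ring
      rw [heq, hid] at hmul
      have hstep := mul_le_mul_of_nonneg_left hq1R (by positivity : (0:ℝ) ≤ (1-ε)^2/2)
      have heps2 : ε^2*Real.exp R ≤ ε*Real.exp R :=
        mul_le_mul_of_nonneg_right
          (by nlinarith only [hε0, hε16] : ε^2 ≤ ε) (Real.exp_pos R).le
      nlinarith only [hUB, hmul, hstep, ebq, hcR, hC3b, heps2]
    · -- ¬ coshDist B q ≤ cosh (R - c₃)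
      intro hcon
      rw [eB] at hcon
      have l1 : 2*δ*((1+ε)^3*Real.exp ((R - b + c₁ + ε - c₃)/2)) ≤ ψ := by
        refine le_trans ?_ hψa
        rw [hψ₁_def]
        exact mul_le_mul_of_nonneg_left (le_max_left _ _) (by positivity)
      have l2 : (2*δ*((1+ε)^3*Real.exp ((R - b + c₁ + ε - c₃)/2)))^2 ≤ ψ^2 :=
        pow_le_pow_left₀ (by positivity) l1 2
      have l3 : (δ*Real.exp ((R-b+c₁+ε-c₃)/2))^2 * (Real.exp b*Real.exp q1)
          = Real.exp (q1+c₁+ε-c₃) := by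
        simp only [hδ_def, pow_two, ← Real.exp_add]; congr 1; ring
      have l4 : Real.exp (R-c₃) ≤ Real.exp (q1+c₁+ε-c₃) :=
        Real.exp_le_exp.2 (by linarith only [hq1lb])
      have l5 := mul_le_mul_of_nonneg_right l2
        (show (0:ℝ) ≤ Real.exp b*Real.exp q1 by positivity)
      have l6 : (2*δ*((1+ε)^3*Real.exp ((R - b + c₁ + ε - c₃)/2)))^2
            * (Real.exp b*Real.exp q1)
          = 4*(1+ε)^6 * ((δ*Real.exp ((R-b+c₁+ε-c₃)/2))^2 * (Real.exp b*Real.exp q1)) := by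
        ring
      rw [l6, l3] at l5
      have l7 : 4*(1+ε)^6*Real.exp (R-c₃) ≤ 4*(1+ε)^6*Real.exp (q1+c₁+ε-c₃) :=
        mul_le_mul_of_nonneg_left l4 (by positivity)
      have hLB := chainLB (Real.exp b) (Real.exp q1) (Real.sinh b) (Real.sinh q1)
        (Real.sin (ψ/2)) ψ (Real.exp (R-c₃)) ε hε0.le hε16 (Real.exp_pos _)
        (Real.exp_pos _) hψpos.le hsb hsq1 hsinψ
        (by linarith only [l5, l7]) (Real.exp_pos _).le
      have hcoshub : Real.cosh (R-c₃) ≤ (1+ε)*Real.exp (R-c₃)/2 :=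
        cosh_ub (by nlinarith only [hC3, Real.exp_pos c₂])
          (by linarith only [hC1, h31, h12])
      linarith only [hcon, hLB, ebq1, hcoshub]
    · -- coshDist origin q ≤ cosh (R - c₁)
      show coshDist origin (q1,q2) ≤ Real.cosh (R-c₁)
      have ho : coshDist origin (q1,q2) = Real.cosh q1 := by
        unfold coshDist origin
        simp [Real.cosh_zero, Real.sinh_zero]
      rw [ho, Real.cosh_le_cosh, abs_of_nonneg (by linarith only [hq10] : (0:ℝ) ≤ q1),
        abs_of_nonneg (by linarith only [hC1, h12] : (0:ℝ) ≤ R-c₁)]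
      exact hq1ub
    · -- ¬ coshDist origin q ≤ cosh (R - c₂)
      show ¬ coshDist origin (q1,q2) ≤ Real.cosh (R-c₂)
      have ho : coshDist origin (q1,q2) = Real.cosh q1 := by
        unfold coshDist origin
        simp [Real.cosh_zero, Real.sinh_zero]
      rw [ho, not_le, Real.cosh_lt_cosh,
        abs_of_nonneg (by linarith only [hC1] : (0:ℝ) ≤ R-c₂),
        abs_of_nonneg (by linarith only [hq10] : (0:ℝ) ≤ q1)]
      linarith only [hq1lb, hεc, h12]
    · -- ¬ coshDist A q ≤ cosh R
      intro hcon
      rw [eA] at hcon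
      have lA : 2*δ*Ψa ≤ ψ₁ := by
        rw [hψ₁_def]
        exact mul_le_mul_of_nonneg_left (le_max_right _ _) (by positivity)
      have l1 : 2*δ*((1+ε)^3*Real.exp ((R - a + c₁ + ε)/2)) ≤ φ + ψ := by
        have hΨeq : 2*δ*Ψa = 2*δ*((1+ε)^3*Real.exp ((R - a + c₁ + ε)/2))
            - 2*(1-ε)*(δ*Real.exp ((2*R-a-b-c₃)/2)) := by
          rw [hΨa_def]; ring
        have hsum := add_le_add hφlb (le_trans lA hψa)
        linarith only [hsum, hΨeq]
      have l2 : (2*δ*((1+ε)^3*Real.exp ((R - a + c₁ + ε)/2)))^2 ≤ (φ+ψ)^2 :=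
        pow_le_pow_left₀ (by positivity) l1 2
      have l3 : (δ*Real.exp ((R-a+c₁+ε)/2))^2 * (Real.exp a*Real.exp q1)
          = Real.exp (q1+c₁+ε) := by
        simp only [hδ_def, pow_two, ← Real.exp_add]; congr 1; ring
      have l4 : Real.exp R ≤ Real.exp (q1+c₁+ε) :=
        Real.exp_le_exp.2 (by linarith only [hq1lb])
      have l5 := mul_le_mul_of_nonneg_right l2
        (show (0:ℝ) ≤ Real.exp a*Real.exp q1 by positivity)
      have l6 : (2*δ*((1+ε)^3*Real.exp ((R - a + c₁ + ε)/2)))^2 * (Real.exp a*Real.exp q1)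
          = 4*(1+ε)^6 * ((δ*Real.exp ((R-a+c₁+ε)/2))^2 * (Real.exp a*Real.exp q1)) := by
        ring
      rw [l6, l3] at l5
      have l7 : 4*(1+ε)^6*Real.exp R ≤ 4*(1+ε)^6*Real.exp (q1+c₁+ε) :=
        mul_le_mul_of_nonneg_left l4 (by positivity)
      have hLB := chainLB (Real.exp a) (Real.exp q1) (Real.sinh a) (Real.sinh q1)
        (Real.sin ((φ+ψ)/2)) (φ+ψ) (Real.exp R) ε hε0.le hε16 (Real.exp_pos _)
        (Real.exp_pos _) hx0.le hsa hsq1 hsinx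
        (by linarith only [l5, l7]) (Real.exp_pos _).le
      have hcoshub : Real.cosh R ≤ (1+ε)*Real.exp R/2 :=
        cosh_ub (by nlinarith only [hC3b, Real.exp_pos c₂]) hRpos.le
      linarith only [hcon, hLB, eaq1, hcoshub]
  -- measure estimate
  have hαpos : 0 < α := by linarith
  have hKm : MeasurableSet K := measurableSet_Icc.prod measurableSet_Icc
  set d0 : ℝ := α * Real.sinh (α*ν₁) / (2*Real.pi*(Real.cosh (α*R) - 1)) with hd0_def
  have hcoshαR : 1 < Real.cosh (α*R) := by
    rw [← Real.cosh_zero, Real.cosh_lt_cosh]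
    simp [abs_of_pos (mul_pos hαpos hRpos), mul_pos hαpos hRpos]
  have hden : 0 < 2*Real.pi*(Real.cosh (α*R) - 1) := by nlinarith only [hπ0, hcoshαR]
  have hd00 : 0 < d0 := by
    apply div_pos (mul_pos hαpos _) hden
    exact Real.sinh_pos_iff.2 (mul_pos hαpos (by linarith only [hν₁2]))
  have hdens : ∀ p ∈ K, d0 ≤ dens α R p := by
    rintro ⟨p1, p2⟩ ⟨hp1, hp2⟩
    simp only [Set.mem_Icc] at hp1 hp2
    have hval : (0:ℝ) ≤ p1 ∧ p1 < R ∧ (0:ℝ) ≤ p2 ∧ p2 < 2*Real.pi := by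
      refine ⟨by linarith only [hν₁2, hp1.1], ?_, by linarith only [ht₁0, hp2.1],
        by linarith only [hp2.2, ht₁π]⟩
      rw [hν₂_def] at hp1
      linarith only [hp1.2, h10]
    unfold dens
    rw [if_pos hval, hd0_def, div_le_div_iff_of_pos_right hden]
    have hss : Real.sinh (α*ν₁) ≤ Real.sinh (α*p1) :=
      Real.sinh_le_sinh.2 (mul_le_mul_of_nonneg_left hp1.1 hαpos.le)
    exact mul_le_mul_of_nonneg_left hss hαpos.le
  have hlow := hyp_lower α R d0 hKm hdens
  have hvolK : volume K = ENNReal.ofReal ε * ENNReal.ofReal (w/4) := by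
    rw [hK_def, vol_rect, show ν₂ - ν₁ = ε from by rw [hν₂_def, hν₁_def]; ring,
      show t₁ + w/4 - t₁ = w/4 from by ring]
  have hd1d0 : d₁ ≤ d0 := by
    have hαν : 1 ≤ α*ν₁ := by nlinarith only [hα, hν₁2]
    have s1 : Real.exp (α*ν₁)/4 ≤ Real.sinh (α*ν₁) := by
      rw [Real.sinh_eq]
      have h1 : Real.exp (-(α*ν₁)) ≤ 1 := Real.exp_le_one_iff.2 (by linarith only [hαν])
      have h2 : (2:ℝ) ≤ Real.exp (α*ν₁) := by
        have h3 : (2:ℝ) ≤ Real.exp 1 := by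
          nlinarith only [Real.add_one_le_exp 1]
        exact le_trans h3 (Real.exp_le_exp.2 hαν)
      linarith only [h1, h2]
    have s2 : Real.cosh (α*R) - 1 ≤ Real.exp (α*R) := by
      have hh := cosh_ub0 (le_of_lt (mul_pos hαpos hRpos))
      nlinarith only [hh, Real.exp_pos (α*R)]
    have s3 : Real.exp (α*ν₁) = Real.exp (α*R) * Real.exp (-(α*(c₁+ε))) := by
      rw [← Real.exp_add]; congr 1; rw [hν₁_def]; ring
    have s4 : Real.exp (-(c₁+1)) ≤ Real.exp (-(α*(c₁+ε))) := by
      apply Real.exp_le_exp.2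
      have : α*(c₁+ε) ≤ c₁+ε := by nlinarith only [hα', h10, hε0]
      linarith only [this, hε16]
    rw [hd₁_def, hd0_def, div_le_div_iff₀ (by positivity) hden]
    have s5 : Real.exp (-(c₁+1)) * (2*Real.pi*(Real.cosh (α*R) - 1))
        ≤ Real.exp (-(α*(c₁+ε))) * (2*Real.pi*Real.exp (α*R)) := by
      apply mul_le_mul s4 _ (by nlinarith only [hπ0, hcoshαR]) (Real.exp_pos _).le
      nlinarith only [s2, hπ0]
    have s6 : Real.exp (-(α*(c₁+ε))) * (2*Real.pi*Real.exp (α*R))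
        ≤ α * Real.sinh (α*ν₁) * (16*Real.pi) := by
      have s7 : (1/2) * (Real.exp (α*ν₁)/4) ≤ α * Real.sinh (α*ν₁) :=
        mul_le_mul hα.le s1 (by positivity)
          (by linarith only [hα])
      have s8 : Real.exp (-(α*(c₁+ε))) * (2*Real.pi*Real.exp (α*R))
          = (1/2) * (Real.exp (α*ν₁)/4) * (16*Real.pi) := by
        rw [s3]; ring
      rw [s8]
      exact mul_le_mul_of_nonneg_right s7 (by positivity)
    linarith only [s5, s6]
  have hreal : d₁*ε*κ/2*δ ≤ d0*(ε*(w/4)) := by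
    have hA1 : (0:ℝ) ≤ d0*ε*(w - 2*δ*κ) :=
      mul_nonneg (mul_nonneg hd00.le hε0.le) (by linarith only [hwκ])
    have hA2 : (0:ℝ) ≤ (d0 - d₁)*(ε*(δ*κ)) :=
      mul_nonneg (by linarith only [hd1d0]) (by positivity)
    nlinarith only [hA1, hA2]
  have hof : ENNReal.ofReal (d₁*ε*κ/2*δ) ≤ hypMeasure α R K := by
    calc ENNReal.ofReal (d₁*ε*κ/2*δ) ≤ ENNReal.ofReal (d0*(ε*(w/4))) :=
          ENNReal.ofReal_le_ofReal hreal
      _ = ENNReal.ofReal d0 * (ENNReal.ofReal ε * ENNReal.ofReal (w/4)) := by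
          rw [ENNReal.ofReal_mul hd00.le, ENNReal.ofReal_mul hε0.le]
      _ = ENNReal.ofReal d0 * volume K := by rw [hvolK]
      _ ≤ hypMeasure α R K := hlow
  have hfin := mes_lower hαpos hRpos (by positivity : (0:ℝ) ≤ d₁*ε*κ/2*δ) hsub hof
  exact hfin
end

section
/- Let (m(n))_{n≥1} be a sequence of nonnegative integers with m(n) = o(√n). Then e^{−n} n^{n−m(n)} / (n−m(n))! = Θ(1/√n); that is, there exist constants c₁, c₂ > 0 and n₀ ∈ ℕ such that c₁/√n ≤ e^{−n} n^{n−m(n)} / (n−m(n))! ≤ c₂/√n for all n ≥ n₀. -/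
open Real MeasureTheory Filter

lemma my_sqrt_pi_le_stirlingSeq (j : ℕ) : Real.sqrt π ≤ Stirling.stirlingSeq (j + 1) := by
  have ht : Tendsto (Stirling.stirlingSeq ∘ Nat.succ) atTop (nhds (Real.sqrt π)) :=
    Stirling.tendsto_stirlingSeq_sqrt_pi.comp (tendsto_add_atTop_nat 1)
  exact Stirling.stirlingSeq'_antitone.le_of_tendsto ht j

lemma my_stirlingSeq_le (j : ℕ) : Stirling.stirlingSeq (j + 1) ≤ Real.exp 1 / Real.sqrt 2 := by
  have := Stirling.stirlingSeq'_antitone (Nat.zero_le j)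
  simpa [Stirling.stirlingSeq_one] using this

lemma my_factorial_bounds (k : ℕ) (hk : 1 ≤ k) :
    Real.sqrt π * (Real.sqrt (2 * k) * ((k : ℝ) / Real.exp 1) ^ k) ≤ (Nat.factorial k : ℝ) ∧
    (Nat.factorial k : ℝ) ≤ (Real.exp 1 / Real.sqrt 2) *
      (Real.sqrt (2 * k) * ((k : ℝ) / Real.exp 1) ^ k) := by
  obtain ⟨j, rfl⟩ := Nat.exists_eq_add_of_le hk
  have hd : (0:ℝ) < Real.sqrt (2 * (1 + j : ℕ)) * (((1 + j : ℕ) : ℝ) / Real.exp 1) ^ (1 + j) := by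
    have : (0:ℝ) < ((1 + j : ℕ) : ℝ) := by positivity
    positivity
  have h1 : Real.sqrt π ≤ Stirling.stirlingSeq (1 + j) := by
    rw [add_comm]; exact my_sqrt_pi_le_stirlingSeq j
  have h2 : Stirling.stirlingSeq (1 + j) ≤ Real.exp 1 / Real.sqrt 2 := by
    rw [add_comm]; exact my_stirlingSeq_le j
  rw [Stirling.stirlingSeq, le_div_iff₀ hd] at h1
  rw [Stirling.stirlingSeq, div_le_iff₀ hd] at h2
  constructor
  · calc Real.sqrt π * (Real.sqrt (2 * ((1+j:ℕ):ℝ)) * (((1+j:ℕ):ℝ) / Real.exp 1) ^ (1+j))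
        = Real.sqrt π * (Real.sqrt (2 * (1+j:ℕ)) * (((1+j:ℕ):ℝ) / Real.exp 1) ^ (1+j)) := by
          norm_num
      _ ≤ _ := by linarith
  · calc ((1+j).factorial : ℝ) ≤ (Real.exp 1 / Real.sqrt 2) *
          (Real.sqrt (2 * (1+j:ℕ)) * (((1+j:ℕ):ℝ) / Real.exp 1) ^ (1+j)) := by linarith
      _ = _ := by norm_num

/-- If `m(n) = o(√n)`, then `P(Poisson(n) = n - m(n)) = Θ(1/√n)`. -/
theorem poisson_near_mode (m : ℕ → ℕ)
    (hm : Tendsto (fun n : ℕ => (m n : ℝ) / Real.sqrt n) atTop (nhds 0)) :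
    ∃ c₁ > (0:ℝ), ∃ c₂ > (0:ℝ), ∃ n₀ : ℕ, ∀ n ≥ n₀,
      c₁ / Real.sqrt n ≤
        Real.exp (-(n : ℝ)) * (n : ℝ) ^ (n - m n) / (Nat.factorial (n - m n) : ℝ) ∧
      Real.exp (-(n : ℝ)) * (n : ℝ) ^ (n - m n) / (Nat.factorial (n - m n) : ℝ) ≤
        c₂ / Real.sqrt n := by
  have h2 : ∀ᶠ n in atTop, (m n : ℝ) / Real.sqrt n < 1/2 :=
    hm.eventually (gt_mem_nhds (by norm_num))
  obtain ⟨N, hN⟩ := eventually_atTop.mp h2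
  refine ⟨Real.exp (-(5/4)), Real.exp_pos _, 1, one_pos, max N 4, fun n hn => ?_⟩
  have hn4 : 4 ≤ n := le_trans (le_max_right _ _) hn
  have hNn := hN n (le_trans (le_max_left _ _) hn)
  set a := (n : ℝ) with ha_def
  have ha4 : (4:ℝ) ≤ a := by rw [ha_def]; exact_mod_cast hn4
  have ha : 0 < a := by linarith
  have hsa : 0 < Real.sqrt a := Real.sqrt_pos.mpr ha
  have hM0 : (0:ℝ) ≤ (m n : ℝ) := Nat.cast_nonneg _
  have hM : (m n : ℝ) < Real.sqrt a / 2 := by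
    have := (div_lt_iff₀ hsa).mp hNn
    linarith
  have h2s : (2:ℝ) ≤ Real.sqrt a := by
    have : Real.sqrt 4 ≤ Real.sqrt a := Real.sqrt_le_sqrt ha4
    rwa [show (4:ℝ) = 2^2 by norm_num, Real.sqrt_sq (by norm_num)] at this
  have hss : Real.sqrt a * Real.sqrt a = a := Real.mul_self_sqrt ha.le
  have hsqa : Real.sqrt a ≤ a / 2 := by nlinarith
  have hMa : (m n : ℝ) ≤ a / 4 := by linarith
  have hmn : m n ≤ n := by
    have : (m n : ℝ) ≤ (n : ℝ) := by linarith
    exact_mod_cast this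
  set k := n - m n with hk_def
  have hb : (k : ℝ) = a - m n := by
    rw [hk_def, Nat.cast_sub hmn]
  have hb3 : (3:ℝ) ≤ (k:ℝ) := by rw [hb]; linarith
  have hb0 : (0:ℝ) < (k:ℝ) := by linarith
  have hba : (k:ℝ) ≤ a := by rw [hb]; linarith
  have hab2 : a ≤ 2 * (k:ℝ) := by rw [hb]; linarith
  have hk1 : 1 ≤ k := by exact_mod_cast (by linarith : (1:ℝ) ≤ (k:ℝ))
  have hM2 : ((m n : ℝ))^2 / a ≤ 1/4 := by
    rw [div_le_iff₀ ha]
    nlinarith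
  -- log inequalities
  have hA : (k:ℝ) * (Real.log a - Real.log (k:ℝ)) ≤ a - (k:ℝ) := by
    have h1 : Real.log (a / (k:ℝ)) ≤ a / (k:ℝ) - 1 :=
      Real.log_le_sub_one_of_pos (by positivity)
    have h2' : (k:ℝ) * (a / (k:ℝ) - 1) = a - (k:ℝ) := by field_simp
    calc (k:ℝ) * (Real.log a - Real.log (k:ℝ)) = (k:ℝ) * Real.log (a / (k:ℝ)) := by
          rw [Real.log_div ha.ne' hb0.ne']
      _ ≤ (k:ℝ) * (a / (k:ℝ) - 1) := mul_le_mul_of_nonneg_left h1 hb0.le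
      _ = a - (k:ℝ) := h2'
  have hB : a - (k:ℝ) - 1/4 ≤ (k:ℝ) * (Real.log a - Real.log (k:ℝ)) := by
    have h1 : Real.log ((k:ℝ) / a) ≤ (k:ℝ) / a - 1 :=
      Real.log_le_sub_one_of_pos (by positivity)
    have h3 : (k:ℝ) * Real.log ((k:ℝ) / a) ≤ (k:ℝ) * ((k:ℝ)/a - 1) :=
      mul_le_mul_of_nonneg_left h1 hb0.le
    have h4 : Real.log ((k:ℝ) / a) = Real.log (k:ℝ) - Real.log a :=
      Real.log_div hb0.ne' ha.ne'
    have hMval : a - (k:ℝ) = (m n : ℝ) := by rw [hb]; ring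
    have e1 : (k:ℝ) * ((k:ℝ)/a - 1) = -(a - (k:ℝ)) + (a - (k:ℝ))^2 / a := by
      field_simp; ring
    have e2 : (a - (k:ℝ))^2 / a ≤ 1/4 := by rw [hMval]; exact hM2
    rw [h4] at h3
    nlinarith
  -- Stirling bounds
  obtain ⟨factL, factU⟩ := my_factorial_bounds k hk1
  have hfactpos : (0:ℝ) < (Nat.factorial k : ℝ) := by
    exact_mod_cast Nat.factorial_pos k
  have hS0 : (0:ℝ) < Real.sqrt (2 * (k:ℝ)) := by positivity
  have hS : Real.sqrt a ≤ Real.sqrt (2 * (k:ℝ)) := Real.sqrt_le_sqrt (by linarith)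
  have hS2 : Real.sqrt (2 * (k:ℝ)) ≤ Real.sqrt 2 * Real.sqrt a := by
    rw [← Real.sqrt_mul (by norm_num : (0:ℝ) ≤ 2)]
    exact Real.sqrt_le_sqrt (by linarith)
  have hapow : a ^ k = Real.exp ((k:ℝ) * Real.log a) := by
    rw [← Real.rpow_natCast a k, Real.rpow_def_of_pos ha, mul_comm]
  have hbpow : ((k:ℝ) / Real.exp 1) ^ k = Real.exp ((k:ℝ) * (Real.log (k:ℝ) - 1)) := by
    rw [← Real.rpow_natCast ((k:ℝ) / Real.exp 1) k, Real.rpow_def_of_pos (by positivity),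
      Real.log_div hb0.ne' (Real.exp_ne_zero 1), Real.log_exp, mul_comm]
  have hpi : (1:ℝ) ≤ Real.sqrt π := by
    rw [show (1:ℝ) = Real.sqrt 1 by simp]
    exact Real.sqrt_le_sqrt (by linarith [Real.pi_gt_three])
  constructor
  · rw [div_le_div_iff₀ hsa hfactpos]
    calc Real.exp (-(5/4)) * (Nat.factorial k : ℝ)
        ≤ Real.exp (-(5/4)) * ((Real.exp 1 / Real.sqrt 2) *
            (Real.sqrt (2 * (k:ℝ)) * ((k:ℝ) / Real.exp 1) ^ k)) := by
          exact mul_le_mul_of_nonneg_left factU (Real.exp_pos _).le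
      _ ≤ Real.exp (-(5/4)) * ((Real.exp 1 / Real.sqrt 2) *
            ((Real.sqrt 2 * Real.sqrt a) * ((k:ℝ) / Real.exp 1) ^ k)) := by
          gcongr
      _ = (Real.exp 1 / Real.sqrt 2 * Real.sqrt 2) *
            (Real.exp (-(5/4)) * Real.exp ((k:ℝ) * (Real.log (k:ℝ) - 1)) * Real.sqrt a) := by
          rw [hbpow]; ring
      _ = (Real.exp (-(5/4)) * Real.exp 1 * Real.exp ((k:ℝ) * (Real.log (k:ℝ) - 1)))
            * Real.sqrt a := by
          rw [div_mul_cancel₀ _ (show Real.sqrt 2 ≠ 0 by positivity)]; ring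
      _ = Real.exp (-(5/4) + 1 + (k:ℝ) * (Real.log (k:ℝ) - 1)) * Real.sqrt a := by
          rw [← Real.exp_add, ← Real.exp_add]
      _ ≤ Real.exp (-a + (k:ℝ) * Real.log a) * Real.sqrt a := by
          apply mul_le_mul_of_nonneg_right _ hsa.le
          apply Real.exp_le_exp.mpr
          rw [mul_sub] at hB
          rw [mul_sub, mul_one]
          linarith
      _ = Real.exp (-a) * a ^ k * Real.sqrt a := by
          rw [Real.exp_add, hapow]
  · rw [div_le_div_iff₀ hfactpos hsa, one_mul]
    calc Real.exp (-a) * a ^ k * Real.sqrt a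
        = Real.exp (-a + (k:ℝ) * Real.log a) * Real.sqrt a := by
          rw [Real.exp_add, hapow]
      _ ≤ Real.exp (-a + (k:ℝ) * Real.log a) * Real.sqrt (2 * (k:ℝ)) := by
          exact mul_le_mul_of_nonneg_left hS (Real.exp_pos _).le
      _ ≤ Real.exp ((k:ℝ) * (Real.log (k:ℝ) - 1)) * Real.sqrt (2 * (k:ℝ)) := by
          apply mul_le_mul_of_nonneg_right _ hS0.le
          apply Real.exp_le_exp.mpr
          rw [mul_sub] at hA
          rw [mul_sub, mul_one]
          linarith
      _ = Real.sqrt (2 * (k:ℝ)) * ((k:ℝ) / Real.exp 1) ^ k := by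
          rw [hbpow]; ring
      _ ≤ Real.sqrt π * (Real.sqrt (2 * (k:ℝ)) * ((k:ℝ) / Real.exp 1) ^ k) := by
          apply le_mul_of_one_le_left (by positivity) hpi
      _ ≤ (Nat.factorial k : ℝ) := factL
end

section
/- Let ξ > 0 be a constant. There exists n₀ ∈ ℕ such that for all n ≥ n₀ the following deterministic statement holds: any two points u, v with r_u > R − ξ, r_v > R − ξ and d(u,v) ≤ R satisfy |θ_u − θ_v| ≤ 3 e^{ξ − C/2}/n. -/
open Real MeasureTheory Filter

set_option maxHeartbeats 1000000 in

lemma stage1 (φ A t p c : ℝ) (hφ0 : 0 ≤ φ) (hA0 : 0 < A) (ht0 : 0 < t)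
    (hAt : 1000 * t ≤ A) (hAt2 : 21 * t ^ 2 ≤ A) (hp : 0 < p) (hplt : p < 3.15)
    (hsin : 2 * φ ^ 2 ≤ p ^ 2 * (1 - c))
    (hstar : (A - t) ^ 2 * (1 - c) ≤ 4 * t ^ 2 * A) : φ ≤ 1 := by
  have hAt' : (999 / 1000) * A ≤ A - t := by linarith
  have h7 : ((999 / 1000) * A) ^ 2 ≤ (A - t) ^ 2 :=
    pow_le_pow_left₀ (by positivity) hAt' 2
  have h5 : 2 * φ ^ 2 * (A - t) ^ 2 ≤ p ^ 2 * (4 * t ^ 2 * A) := by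
    nlinarith [mul_le_mul_of_nonneg_right hsin (sq_nonneg (A - t)),
      mul_le_mul_of_nonneg_left hstar (sq_nonneg p)]
  have h6 : 4 * t ^ 2 * A ≤ (4 / 21) * A ^ 2 := by nlinarith
  have k1 : 2 * φ ^ 2 * ((999 / 1000) * A) ^ 2 ≤ 2 * φ ^ 2 * (A - t) ^ 2 :=
    mul_le_mul_of_nonneg_left h7 (by positivity)
  have k2 : p ^ 2 * (4 * t ^ 2 * A) ≤ p ^ 2 * ((4 / 21) * A ^ 2) :=
    mul_le_mul_of_nonneg_left h6 (sq_nonneg p)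
  have k3 : p ^ 2 ≤ 9.9225 := by nlinarith
  have k4 : p ^ 2 * ((4 / 21) * A ^ 2) ≤ 9.9225 * ((4 / 21) * A ^ 2) :=
    mul_le_mul_of_nonneg_right k3 (by positivity)
  have k5 : φ ^ 2 ≤ 1 := by
    by_contra h
    push_neg at h
    have hAA : A ^ 2 ≤ φ ^ 2 * A ^ 2 := by nlinarith [mul_pos hA0 hA0]
    nlinarith [k1, k2, k4, h5, mul_pos hA0 hA0]
  nlinarith [k5, hφ0]

lemma stage2 (φ A t c : ℝ) (hφ0 : 0 ≤ φ) (hA0 : 0 < A) (ht0 : 0 < t)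
    (hAt : 1000 * t ≤ A)
    (hstar : (A - t) ^ 2 * (1 - c) ≤ 4 * t ^ 2 * A)
    (hc2 : 43 / 96 * φ ^ 2 ≤ 1 - c) : φ ^ 2 * A ≤ 9 * t ^ 2 := by
  have hAt' : (999 / 1000) * A ≤ A - t := by linarith
  have h7 : ((999 / 1000) * A) ^ 2 ≤ (A - t) ^ 2 :=
    pow_le_pow_left₀ (by positivity) hAt' 2
  nlinarith [mul_le_mul_of_nonneg_right hc2 (sq_nonneg (A - t)), hstar,
    mul_le_mul_of_nonneg_left h7 (mul_nonneg (by norm_num : (0:ℝ) ≤ 43/96) (sq_nonneg φ)),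
    mul_pos hA0 hA0, sq_nonneg φ]

lemma cos_ub_aux (φ : ℝ) (h0 : 0 ≤ φ) (h1 : φ ≤ 1) : 43 / 96 * φ ^ 2 ≤ 1 - Real.cos φ := by
  have hcb := Real.cos_bound (x := φ) (abs_le.mpr ⟨by linarith, h1⟩)
  rw [abs_of_nonneg h0] at hcb
  have h := abs_le.mp hcb
  have hφ2 : φ ^ 2 ≤ 1 := by nlinarith
  have hφ4 : φ ^ 4 ≤ φ ^ 2 := by nlinarith [sq_nonneg φ]
  linarith [h.2]

lemma one_sub_cos_lb (x : ℝ) (h0 : 0 ≤ x) (hπ : x ≤ Real.pi) :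
    2 * x ^ 2 ≤ Real.pi ^ 2 * (1 - Real.cos x) := by
  have hπpos : 0 < Real.pi := Real.pi_pos
  have hs := Real.mul_le_sin (x := x / 2) (by linarith) (by linarith)
  have hsq := Real.sin_sq_eq_half_sub (x / 2)
  rw [show 2 * (x / 2) = x by ring] at hsq
  have hx : x ≤ Real.pi * Real.sin (x / 2) := by
    have h := mul_le_mul_of_nonneg_left hs hπpos.le
    calc x = Real.pi * (2 / Real.pi * (x / 2)) := by field_simp
    _ ≤ Real.pi * Real.sin (x / 2) := h
  have h2 : x ^ 2 ≤ (Real.pi * Real.sin (x / 2)) ^ 2 := by nlinarith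
  nlinarith [h2, hsq]

/-- Deterministic: two points of radius larger than `R - ξ` at hyperbolic
distance at most `R` subtend an angle at most `3 e^{ξ - C/2}/n` at the origin. -/
theorem angle_bound_boundary (α C ξ : ℝ) (hα : 1/2 < α) (hα' : α < 1) (hξ : 0 < ξ) :
    ∃ n₀ : ℕ, ∀ n ≥ n₀, ∀ u v : ℝ × ℝ,
      validPoint (Rn C n) u → validPoint (Rn C n) v →
      Rn C n - ξ < u.1 → Rn C n - ξ < v.1 →
      coshDist u v ≤ Real.cosh (Rn C n) →
      angDist u.2 v.2 ≤ 3 * Real.exp (ξ - C / 2) / n := by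
  refine ⟨⌈Real.exp ((2 * ξ + Real.log 1000 - C) / 2)⌉₊ + 1, ?_⟩
  intro n hn u v hu hv hru hrv hd
  obtain ⟨hu1, hu2, hu3, hu4⟩ := hu
  obtain ⟨hv1, hv2, hv3, hv4⟩ := hv
  have hn0 : 0 < n := lt_of_lt_of_le (Nat.succ_pos _) hn
  have hnR : (0 : ℝ) < n := by exact_mod_cast hn0
  set R := Rn C n with hRdef
  have hπpos : 0 < Real.pi := Real.pi_pos
  have hlogn : (2 * ξ + Real.log 1000 - C) / 2 < Real.log n := by
    rw [Real.lt_log_iff_exp_lt hnR]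
    calc Real.exp ((2 * ξ + Real.log 1000 - C) / 2)
        ≤ (⌈Real.exp ((2 * ξ + Real.log 1000 - C) / 2)⌉₊ : ℝ) := Nat.le_ceil _
      _ < n := by exact_mod_cast hn
  have hRK : 2 * ξ + Real.log 1000 < R := by
    have : R = 2 * Real.log n + C := rfl
    linarith
  have hlog1000 : (0 : ℝ) < Real.log 1000 := Real.log_pos (by norm_num)
  have hR0 : 0 < R := by linarith
  have hE : Real.exp R = (n : ℝ) ^ 2 * Real.exp C := by
    rw [show R = Real.log n + Real.log n + C by rw [hRdef]; unfold Rn; ring,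
      Real.exp_add, Real.exp_add, Real.exp_log hnR]
    ring
  set A := Real.exp R with hAdef
  set t := Real.exp ξ with htdef
  have hA0 : 0 < A := Real.exp_pos _
  have ht0 : 0 < t := Real.exp_pos _
  have hAt : 1000 * t ≤ A := by
    have h := Real.exp_le_exp.mpr (show ξ + Real.log 1000 ≤ R by linarith)
    rw [Real.exp_add, Real.exp_log (by norm_num : (0:ℝ) < 1000)] at h
    linarith
  have ht2 : Real.exp (2 * ξ) = t ^ 2 := by
    rw [show 2 * ξ = ξ + ξ by ring, Real.exp_add]; ring
  have hAt2 : 21 * t ^ 2 ≤ A := by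
    have h21 : Real.log 21 ≤ Real.log 1000 := Real.log_le_log (by norm_num) (by norm_num)
    have h := Real.exp_le_exp.mpr (show 2 * ξ + Real.log 21 ≤ R by linarith)
    rw [Real.exp_add, Real.exp_log (by norm_num : (0:ℝ) < 21), ht2] at h
    linarith
  have hAtpos : (0 : ℝ) < A - t := by linarith
  have hsinh : ∀ w : ℝ, 0 ≤ w → R - ξ < w → A - t ≤ 2 * t * Real.sinh w := by
    intro w hw0 hw
    have h1 : A / t ≤ Real.exp w := by
      have := Real.exp_le_exp.mpr hw.le
      rwa [Real.exp_sub] at this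
    have h1' : A ≤ t * Real.exp w := by
      rw [div_le_iff₀ ht0] at h1; linarith
    have h2 : Real.exp (-w) ≤ 1 := Real.exp_le_one_iff.mpr (by linarith)
    rw [Real.sinh_eq]
    nlinarith [h1', mul_le_mul_of_nonneg_left h2 ht0.le]
  have hsu := hsinh u.1 hu1 hru
  have hsv := hsinh v.1 hv1 hrv
  have hsinh0 : ∀ w : ℝ, 0 ≤ w → 0 ≤ Real.sinh w := by
    intro w hw
    rw [Real.sinh_eq]
    have := Real.exp_le_exp.mpr (show -w ≤ w by linarith)
    linarith
  have hsu0 : 0 ≤ Real.sinh u.1 := hsinh0 _ hu1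
  have hsv0 : 0 ≤ Real.sinh v.1 := hsinh0 _ hv1
  set φ := angDist u.2 v.2 with hφdef
  have habs : |u.2 - v.2| ≤ 2 * Real.pi := by
    rw [abs_le]; constructor <;> linarith
  have hφ0 : 0 ≤ φ := le_min (abs_nonneg _) (by linarith)
  have hφπ : φ ≤ Real.pi := by
    rcases le_total |u.2 - v.2| Real.pi with h | h
    · exact le_trans (min_le_left _ _) h
    · exact le_trans (min_le_right _ _) (by linarith)
  have hcosφ : Real.cos φ = Real.cos (u.2 - v.2) := by
    rw [hφdef]; unfold angDist
    rcases min_cases |u.2 - v.2| (2 * Real.pi - |u.2 - v.2|) with ⟨h, _⟩ | ⟨h, _⟩ <;> rw [h]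
    · exact Real.cos_abs _
    · rw [Real.cos_sub, Real.cos_two_pi, Real.sin_two_pi, Real.cos_abs]; ring_nf
  have hcos1 : Real.cos φ ≤ 1 := Real.cos_le_one _
  have hAR : Real.cosh R ≤ A := by
    rw [Real.cosh_eq]
    have := Real.exp_le_exp.mpr (show -R ≤ R by linarith)
    rw [← hAdef]; linarith
  have hkey : Real.sinh u.1 * Real.sinh v.1 * (1 - Real.cos φ) ≤ A := by
    have hc := Real.cosh_sub u.1 v.1
    have h1 := Real.one_le_cosh (u.1 - v.1)
    unfold coshDist at hd
    rw [← hcosφ] at hd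
    have hexp : Real.sinh u.1 * Real.sinh v.1 * (1 - Real.cos φ) =
        (Real.cosh u.1 * Real.cosh v.1 - Real.sinh u.1 * Real.sinh v.1 * Real.cos φ) -
          Real.cosh (u.1 - v.1) := by rw [hc]; ring
    rw [hexp]
    linarith
  have hstar : (A - t) ^ 2 * (1 - Real.cos φ) ≤ 4 * t ^ 2 * A := by
    have hmul : (A - t) * (A - t) ≤ (2 * t * Real.sinh u.1) * (2 * t * Real.sinh v.1) :=
      mul_le_mul hsu hsv hAtpos.le (by positivity)
    have ha : (A - t) ^ 2 * (1 - Real.cos φ) ≤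
        (2 * t * Real.sinh u.1) * (2 * t * Real.sinh v.1) * (1 - Real.cos φ) := by
      have h := mul_le_mul_of_nonneg_right hmul (show (0:ℝ) ≤ 1 - Real.cos φ by linarith)
      calc (A - t) ^ 2 * (1 - Real.cos φ) = (A - t) * (A - t) * (1 - Real.cos φ) := by ring
        _ ≤ _ := h
    have hb' : (2 * t * Real.sinh u.1) * (2 * t * Real.sinh v.1) * (1 - Real.cos φ) ≤
        4 * t ^ 2 * A := by
      calc (2 * t * Real.sinh u.1) * (2 * t * Real.sinh v.1) * (1 - Real.cos φ)
          = 4 * t ^ 2 * (Real.sinh u.1 * Real.sinh v.1 * (1 - Real.cos φ)) := by ring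
        _ ≤ 4 * t ^ 2 * A := mul_le_mul_of_nonneg_left hkey (by positivity)
    linarith
  have hφ1 : φ ≤ 1 :=
    stage1 φ A t Real.pi (Real.cos φ) hφ0 hA0 ht0 hAt hAt2 hπpos Real.pi_lt_d2
      (one_sub_cos_lb φ hφ0 hφπ) hstar
  have hc2 : 43 / 96 * φ ^ 2 ≤ 1 - Real.cos φ := cos_ub_aux φ hφ0 hφ1
  have h8 : φ ^ 2 * A ≤ 9 * t ^ 2 :=
    stage2 φ A t (Real.cos φ) hφ0 hA0 ht0 hAt hstar hc2
  set b := 3 * Real.exp (ξ - C / 2) / n with hbdef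
  have hb0 : 0 ≤ b := by positivity
  have hbA : b ^ 2 * A = 9 * t ^ 2 := by
    have h9 : Real.exp (ξ - C / 2) ^ 2 * Real.exp C = t ^ 2 := by
      rw [sq, sq, ← Real.exp_add, ← Real.exp_add, ← Real.exp_add]
      congr 1; ring
    have hne : ((n : ℝ)) ^ 2 ≠ 0 := by positivity
    have h10 : b ^ 2 * A = 9 * (Real.exp (ξ - C / 2) ^ 2 * Real.exp C) *
        ((n : ℝ) ^ 2 / (n : ℝ) ^ 2) := by rw [hbdef, hE]; ring
    rw [h10, div_self hne, mul_one, h9]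
  have hφb : φ ^ 2 ≤ b ^ 2 := by
    rw [← mul_le_mul_iff_of_pos_right hA0, hbA]; exact h8
  calc φ = Real.sqrt (φ ^ 2) := (Real.sqrt_sq hφ0).symm
    _ ≤ Real.sqrt (b ^ 2) := Real.sqrt_le_sqrt hφb
    _ = b := Real.sqrt_sq hb0
end
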